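/- arXiv:2404.07958 — 2 statements merged into one kernel-verified Lean document; each statement's English description precedes it below -/
import Mathlib

section
/- The number of parking functions of size n whose parking permutation avoids both 123 and 132 equals (1/√5)·((3+√5)/2)^n − (1/√5)·((3−√5)/2)^n; equivalently, it equals the Fibonacci number F_{2n}. -/
open Finset

noncomputable section

/-- The parking process over the first `k` cars (cars are `0,...,k-1`, i.e. cars `1,...,k`
in 1-indexed terms): returns `some occ` where `occ` maps each spot to the car parked there
(`none` meaning empty), or `none` if some car failed to park.  Car `c` drives to its
preferred spot `f c` and parks at the first free spot with index `≥ f c`, failing if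
no such spot exists. -/
def parkAux {n : ℕ} (f : Fin n → Fin n) : ℕ → Option (Fin n → Option (Fin n))
  | 0 => some fun _ => none
  | k + 1 =>
    (parkAux f k).bind fun occ =>
      if h : k < n then
        if hS : (Finset.univ.filter fun s => f ⟨k, h⟩ ≤ s ∧ occ s = none).Nonempty then
          some (Function.update occ
            ((Finset.univ.filter fun s => f ⟨k, h⟩ ≤ s ∧ occ s = none).min' hS)
            (some ⟨k, h⟩))
        else none
      else some occ

/-- All `n` cars park successfully. -/
def AllPark {n : ℕ} (f : Fin n → Fin n) : Prop := (parkAux f n).isSome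

/-- `f` is a parking function: for every `i ∈ [n]`, at least `i` cars prefer
the first `i` spots.  (Here `i : Fin n` denotes the `(i+1)`-st spot, 0-indexed.) -/
def IsParkingFunction {n : ℕ} (f : Fin n → Fin n) : Prop :=
  ∀ i : Fin n, i.val + 1 ≤ (Finset.univ.filter fun j => f j ≤ i).card

/-- `ρ` is the parking permutation of `f`: after all cars have parked,
spot `i` is occupied by car `ρ i`. -/
def IsParkingPerm {n : ℕ} (f : Fin n → Fin n) (ρ : Equiv.Perm (Fin n)) : Prop :=
  parkAux f n = some fun i => some (ρ i)

/-- `π` contains `σ` as a pattern. -/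
def ContainsPattern {n m : ℕ} (π : Equiv.Perm (Fin n)) (σ : Equiv.Perm (Fin m)) : Prop :=
  ∃ g : Fin m → Fin n, StrictMono g ∧ ∀ a b : Fin m, σ a < σ b ↔ π (g a) < π (g b)

/-- `ρ` avoids every pattern in the list `pats`. -/
def AvoidsAll {n : ℕ} (ρ : Equiv.Perm (Fin n)) (pats : List (Equiv.Perm (Fin 3))) : Prop :=
  ∀ σ ∈ pats, ¬ ContainsPattern ρ σ

/-- The number of parking functions of size `n` whose parking permutation avoids
all patterns in `pats`. -/
def pk (n : ℕ) (pats : List (Equiv.Perm (Fin 3))) : ℕ :=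
  Nat.card {f : Fin n → Fin n // IsParkingFunction f ∧
    ∃ ρ : Equiv.Perm (Fin n), IsParkingPerm f ρ ∧ AvoidsAll ρ pats}

def p123 : Equiv.Perm (Fin 3) := Equiv.ofBijective ![0, 1, 2] (by decide)
def p132 : Equiv.Perm (Fin 3) := Equiv.ofBijective ![0, 2, 1] (by decide)
def p213 : Equiv.Perm (Fin 3) := Equiv.ofBijective ![1, 0, 2] (by decide)
def p231 : Equiv.Perm (Fin 3) := Equiv.ofBijective ![1, 2, 0] (by decide)
def p312 : Equiv.Perm (Fin 3) := Equiv.ofBijective ![2, 0, 1] (by decide)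
def p321 : Equiv.Perm (Fin 3) := Equiv.ofBijective ![2, 1, 0] (by decide)


def Good (m : ℕ) (L : ℕ → ℕ) : Prop :=
  (∀ c, L c ≤ c + 1) ∧ (∀ c' c : ℕ, c' < c → c < c' + L c → L c' = 0) ∧ (∀ c, m ≤ c → L c = 0)

instance goodFinite (m : ℕ) : Finite {L : ℕ → ℕ // Good m L} := by
  have hinj : Function.Injective (fun (L : {L : ℕ → ℕ // Good m L}) =>
      (fun (i : Fin m) => L.1 i.val : Fin m → ℕ)) := by
    rintro ⟨L, hL⟩ ⟨L', hL'⟩ h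
    apply Subtype.ext
    funext c
    by_cases hc : c < m
    · exact congrFun (show (fun (i : Fin m) => L i.val) = (fun (i : Fin m) => L' i.val) from h) ⟨c, hc⟩
    · show L c = L' c
      rw [hL.2.2 c (by omega), hL'.2.2 c (by omega)]
  have : Function.Injective (fun (L : {L : ℕ → ℕ // Good m L}) =>
      (fun (i : Fin m) => (⟨L.1 i.val, by have h1 := L.2.1 i.val; have := i.2; omega⟩ : Fin (m+1)))) := by
    intro a b h
    apply hinj
    funext i
    exact congrArg Fin.val (congrFun h i)
  exact Finite.of_injective _ this

noncomputable def cC (m : ℕ) : ℕ := Nat.card {L : ℕ → ℕ // Good m L}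

lemma cC_zero : cC 0 = 1 := by
  have : Unique {L : ℕ → ℕ // Good 0 L} := by
    refine ⟨⟨⟨fun _ => 0, ?_⟩⟩, ?_⟩
    · exact ⟨fun c => by simp, fun c' c _ h => rfl, fun c _ => rfl⟩
    · rintro ⟨L, hL⟩
      apply Subtype.ext; funext c
      exact hL.2.2 c (Nat.zero_le c)
  rw [cC, Nat.card_unique]

lemma good_drop {m : ℕ} {L : ℕ → ℕ} (hL : Good (m+1) L) (h0 : L m = 0) : Good m L := by
  refine ⟨hL.1, hL.2.1, fun c hc => ?_⟩
  rcases Nat.eq_or_lt_of_le hc with h | h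
  · rw [← h]; exact h0
  · exact hL.2.2 c h

lemma good_peel {m : ℕ} {L : ℕ → ℕ} (hL : Good (m+1) L) (h0 : L m ≠ 0) :
    Good (m - (L m - 1)) (Function.update L m 0) := by
  refine ⟨fun c => ?_, fun c' c hc hlt => ?_, fun c hc => ?_⟩
  · by_cases h : c = m
    · subst h; simp
    · rw [Function.update_of_ne h]; exact hL.1 c
  · by_cases h : c = m
    · subst h; rw [Function.update_self] at hlt; omega
    · rw [Function.update_of_ne h] at hlt
      by_cases h' : c' = m
      · subst h'; simp
      · rw [Function.update_of_ne h']
        exact hL.2.1 c' c hc hlt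
  · by_cases h : c = m
    · subst h; simp
    · rw [Function.update_of_ne h]
      by_cases h' : c < m
      · exact hL.2.1 c m h' (by omega)
      · exact hL.2.2 c (by omega)

lemma good_lift0 {m : ℕ} {L : ℕ → ℕ} (hL : Good m L) : Good (m+1) L :=
  ⟨hL.1, hL.2.1, fun c hc => hL.2.2 c (by omega)⟩

lemma good_lift {m b : ℕ} {L : ℕ → ℕ} (hb : b ≤ m) (hL : Good (m - b) L) :
    Good (m+1) (Function.update L m (b + 1)) := by
  refine ⟨fun c => ?_, fun c' c hc hlt => ?_, fun c hc => ?_⟩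
  · by_cases h : c = m
    · subst h; rw [Function.update_self]; omega
    · rw [Function.update_of_ne h]; exact hL.1 c
  · by_cases h' : c' = m
    · have hcm : c ≠ m := by omega
      rw [Function.update_of_ne hcm] at hlt
      have : L c = 0 := hL.2.2 c (by omega)
      exact absurd hlt (by omega)
    · rw [Function.update_of_ne h']
      by_cases h : c = m
      · subst h
        rw [Function.update_self] at hlt
        exact hL.2.2 c' (by omega)
      · rw [Function.update_of_ne h] at hlt
        exact hL.2.1 c' c hc hlt
  · rw [Function.update_of_ne (by omega)]
    exact hL.2.2 c (by omega)

noncomputable def peel (m : ℕ) : {L : ℕ → ℕ // Good (m+1) L} ≃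
    {L : ℕ → ℕ // Good m L} ⊕ {p : Fin (m+1) × (ℕ → ℕ) // Good (m - p.1.val) p.2} where
  toFun := fun L =>
    if h0 : L.1 m = 0 then .inl ⟨L.1, good_drop L.2 h0⟩
    else .inr ⟨(⟨L.1 m - 1, by have := L.2.1 m; omega⟩, Function.update L.1 m 0),
      good_peel L.2 h0⟩
  invFun := fun x =>
    match x with
    | .inl L => ⟨L.1, good_lift0 L.2⟩
    | .inr p => ⟨Function.update p.1.2 m (p.1.1.val + 1),
        good_lift (by have := p.1.1.2; omega) p.2⟩
  left_inv := by
    rintro ⟨L, hL⟩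
    by_cases h0 : L m = 0
    · simp only [dif_pos h0]
    · simp only [dif_neg h0]
      apply Subtype.ext
      show Function.update (Function.update L m 0) m (L m - 1 + 1) = L
      rw [Function.update_idem]
      have : L m - 1 + 1 = L m := by omega
      rw [this, Function.update_eq_self]
  right_inv := by
    rintro (⟨L, hL⟩ | ⟨⟨b, L⟩, hL⟩)
    · simp only [dif_pos (hL.2.2 m le_rfl)]
    · have hLm : L m = 0 := hL.2.2 m (by omega)
      have hne : Function.update L m (b.val + 1) m ≠ 0 := by simp
      simp only [dif_neg hne]
      congr 1
      apply Subtype.ext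
      apply Prod.ext
      · apply Fin.ext
        show Function.update L m (b.val + 1) m - 1 = b.val
        simp
      · show Function.update (Function.update L m (b.val+1)) m 0 = L
        rw [Function.update_idem, ← hLm, Function.update_eq_self]

def pairSigma {A : Type*} {B : Type*} (P : A → B → Prop) :
    {p : A × B // P p.1 p.2} ≃ Σ a : A, {b : B // P a b} where
  toFun := fun ⟨⟨a, b⟩, h⟩ => ⟨a, b, h⟩
  invFun := fun ⟨a, ⟨b, h⟩⟩ => ⟨⟨a, b⟩, h⟩
  left_inv := fun ⟨⟨a, b⟩, h⟩ => rfl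
  right_inv := fun ⟨a, ⟨b, h⟩⟩ => rfl

lemma nat_card_sigma {k : ℕ} (β : Fin k → Type*) [∀ a, Finite (β a)] :
    Nat.card (Σ a, β a) = ∑ a, Nat.card (β a) := by
  classical
  letI : ∀ a, Fintype (β a) := fun a => Fintype.ofFinite _
  simp [Nat.card_eq_fintype_card, Fintype.card_sigma]

lemma cC_succ (m : ℕ) : cC (m + 1) = cC m + ∑ b : Fin (m+1), cC (m - b.val) := by
  have : Finite {p : Fin (m+1) × (ℕ → ℕ) // Good (m - p.1.val) p.2} :=
    Finite.of_equiv _ (pairSigma (fun (a : Fin (m+1)) (L : ℕ → ℕ) => Good (m - a.val) L)).symm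
  rw [cC, Nat.card_congr (peel m), Nat.card_sum,
    Nat.card_congr (pairSigma (fun (a : Fin (m+1)) (L : ℕ → ℕ) => Good (m - a.val) L)),
    nat_card_sigma]
  rfl

lemma fib_odd_sum (m : ℕ) : ∑ j ∈ range m, Nat.fib (2*j+1) = Nat.fib (2*m) := by
  induction m with
  | zero => simp
  | succ m ih => rw [Finset.sum_range_succ, ih, show 2*(m+1) = 2*m+1+1 by ring,
      Nat.fib_add_two]

lemma cC_fib (m : ℕ) : cC m = Nat.fib (2*m+1) := by
  induction m using Nat.strong_induction_on with
  | _ m ih =>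
    match m with
    | 0 => simpa using cC_zero
    | m+1 =>
      rw [cC_succ, ih m (by omega)]
      have hs : ∑ b : Fin (m+1), cC (m - b.val) = ∑ j ∈ range (m+1), Nat.fib (2*j+1) := by
        rw [Fin.sum_univ_eq_sum_range (fun b => cC (m - b))]
        have h1 : ∀ b ∈ range (m+1), cC (m - b) = Nat.fib (2*(m-b)+1) :=
          fun b hb => ih (m - b) (by simp at hb; omega)
        rw [Finset.sum_congr rfl h1, ← Finset.sum_range_reflect (fun j => Nat.fib (2*j+1))]
        apply Finset.sum_congr rfl
        intro j hj
        simp only [Finset.mem_range] at hj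
        congr 2
      rw [hs, fib_odd_sum, show 2*(m+1)+1 = (2*m+1)+1+1 by ring, Nat.fib_add_two,
        show 2*(m+1) = 2*m+1+1 by ring]

namespace ParkWork

variable {n : ℕ} {f : Fin n → Fin n}

/-- Invariant of the parking process after `k` steps. -/
def Inv (f : Fin n → Fin n) (k : ℕ) (occ : Fin n → Option (Fin n)) : Prop :=
  (∀ s c, occ s = some c → c.val < k ∧ f c ≤ s) ∧
  (∀ s s' c, occ s = some c → occ s' = some c → s = s') ∧
  (∀ c : Fin n, c.val < k → ∃ s, occ s = some c) ∧
  (∀ s c, occ s = some c → ∀ u, f c ≤ u → u < s → ∃ d, occ u = some d ∧ d < c)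

lemma park_succ {k : ℕ} {occ' : Fin n → Option (Fin n)}
    (hk : parkAux f (k+1) = some occ') :
    ∃ occ, parkAux f k = some occ ∧
      ((∃ (h : k < n) (hS : (Finset.univ.filter fun s => f ⟨k, h⟩ ≤ s ∧ occ s = none).Nonempty),
          occ' = Function.update occ
            ((Finset.univ.filter fun s => f ⟨k, h⟩ ≤ s ∧ occ s = none).min' hS)
            (some ⟨k, h⟩)) ∨ (n ≤ k ∧ occ' = occ)) := by
  rw [parkAux] at hk
  cases hm : parkAux f k with
  | none => rw [hm] at hk; simp at hk
  | some occ =>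
    rw [hm] at hk
    simp only [Option.bind_some] at hk
    refine ⟨occ, rfl, ?_⟩
    by_cases h : k < n
    · rw [dif_pos h] at hk
      by_cases hS : (Finset.univ.filter fun s => f ⟨k, h⟩ ≤ s ∧ occ s = none).Nonempty
      · rw [dif_pos hS] at hk
        exact Or.inl ⟨h, hS, (Option.some_injective _ hk).symm⟩
      · rw [dif_neg hS] at hk; simp at hk
    · rw [dif_neg h] at hk
      exact Or.inr ⟨by omega, (Option.some_injective _ hk).symm⟩

lemma inv_of_park : ∀ (k : ℕ) (occ : Fin n → Option (Fin n)),
    parkAux f k = some occ → Inv f k occ := by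
  intro k
  induction k with
  | zero =>
    intro occ h
    rw [parkAux] at h
    have : occ = fun _ => none := (Option.some_injective _ h).symm
    subst this
    exact ⟨fun s c h => by simp at h, fun s s' c h => by simp at h,
      fun c h => by omega, fun s c h => by simp at h⟩
  | succ k ih =>
    intro occ' h
    obtain ⟨occ, hpk, hcase⟩ := park_succ h
    have hI := ih occ hpk
    rcases hcase with ⟨hkn, hS0, rfl⟩ | ⟨hn, rfl⟩
    · set F := (Finset.univ.filter fun s => f ⟨k, hkn⟩ ≤ s ∧ occ s = none) with hF
      set s₀ := F.min' hS0 with hs₀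
      have hmem : f ⟨k, hkn⟩ ≤ s₀ ∧ occ s₀ = none :=
        (Finset.mem_filter.1 (F.min'_mem hS0)).2
      have hrun : ∀ u, f ⟨k, hkn⟩ ≤ u → u < s₀ → occ u ≠ none := by
        intro u hu1 hu2 hne
        have hu : u ∈ F := Finset.mem_filter.2 ⟨Finset.mem_univ _, hu1, hne⟩
        exact absurd hu2 (not_lt.2 (F.min'_le u hu))
      refine ⟨?_, ?_, ?_, ?_⟩
      · intro s c hsc
        rcases eq_or_ne s s₀ with rfl | hne
        · rw [Function.update_self] at hsc
          obtain rfl := (Option.some_injective _ hsc).symm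
          exact ⟨by simp, hmem.1⟩
        · rw [Function.update_of_ne hne] at hsc
          have := (hI.1 s c hsc)
          exact ⟨by omega, this.2⟩
      · intro s s' c hsc hs'c
        by_cases hne : s = s₀
        · rw [hne, Function.update_self] at hsc
          obtain rfl := (Option.some_injective _ hsc).symm
          by_cases hne' : s' = s₀
          · rw [hne, hne']
          · rw [Function.update_of_ne hne'] at hs'c
            have := (hI.1 s' _ hs'c).1
            simp at this
        · rw [Function.update_of_ne hne] at hsc
          by_cases hne' : s' = s₀
          · rw [hne', Function.update_self] at hs'c
            obtain rfl := (Option.some_injective _ hs'c).symm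
            have := (hI.1 s _ hsc).1
            simp at this
          · rw [Function.update_of_ne hne'] at hs'c
            exact hI.2.1 s s' c hsc hs'c
      · intro c hc
        rcases Nat.lt_or_ge c.val k with hck | hck
        · obtain ⟨s, hs⟩ := hI.2.2.1 c hck
          refine ⟨s, ?_⟩
          have hne : s ≠ s₀ := by
            intro heq; rw [heq, hmem.2] at hs; simp at hs
          rw [Function.update_of_ne hne, hs]
        · have : c = ⟨k, hkn⟩ := by apply Fin.ext; simp; omega
          subst this
          exact ⟨s₀, by rw [Function.update_self]⟩
      · intro s c hsc u hu1 hu2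
        rcases eq_or_ne s s₀ with rfl | hne
        · rw [Function.update_self] at hsc
          obtain rfl := (Option.some_injective _ hsc).symm
          have hocc := hrun u hu1 hu2
          cases hocu : occ u with
          | none => exact absurd hocu hocc
          | some d =>
            have hd := (hI.1 u d hocu).1
            have hune : u ≠ s₀ := by intro heq; rw [heq, hmem.2] at hocu; simp at hocu
            exact ⟨d, by rw [Function.update_of_ne hune, hocu], by
              simp only [Fin.lt_def]; omega⟩
        · rw [Function.update_of_ne hne] at hsc
          obtain ⟨d, hdu, hdc⟩ := hI.2.2.2 s c hsc u hu1 hu2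
          have hune : u ≠ s₀ := by intro heq; rw [heq, hmem.2] at hdu; simp at hdu
          exact ⟨d, by rw [Function.update_of_ne hune, hdu], hdc⟩
    · exact ⟨fun s c hsc => ⟨by have := (hI.1 s c hsc).1; omega, (hI.1 s c hsc).2⟩,
        hI.2.1, fun c hc => hI.2.2.1 c (by have := c.2; omega), hI.2.2.2⟩

lemma card_fin_lt {n k : ℕ} (h : k ≤ n) :
    ((Finset.univ : Finset (Fin n)).filter fun c => c.val < k).card = k := by
  rw [← Finset.card_range k]
  apply Finset.card_bij (fun a _ => a.val)
  · intro a ha; simp only [Finset.mem_filter] at ha; simpa using ha.2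
  · intro a ha b hb hab; exact Fin.ext hab
  · intro b hb
    simp only [Finset.mem_range] at hb
    exact ⟨⟨b, by omega⟩, by simp [hb], rfl⟩

lemma occupied_card_le {k : ℕ} {occ : Fin n → Option (Fin n)} (hInv : Inv f k occ) :
    ((Finset.univ : Finset (Fin n)).filter fun s => occ s ≠ none).card ≤ k := by
  rcases Nat.eq_zero_or_pos n with rfl | hn
  · simp [Finset.filter_eq_empty_iff.2 (fun s _ => (Fin.elim0 s : _))]
  calc ((Finset.univ : Finset (Fin n)).filter fun s => occ s ≠ none).card
      ≤ ((Finset.univ : Finset (Fin n)).filter fun c => c.val < k).card := by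
        apply Finset.card_le_card_of_injOn (fun s => (occ s).getD ⟨0, hn⟩)
        · intro s hs
          simp only [Finset.mem_coe, Finset.mem_filter, Finset.mem_univ, true_and] at hs ⊢
          cases hocs : occ s with
          | none => exact absurd hocs hs
          | some c => simp only [hocs, Option.getD_some]; exact (hInv.1 s c hocs).1
        · intro s hs t ht hst
          simp only [Finset.mem_coe, Finset.mem_filter, Finset.mem_univ, true_and] at hs ht
          cases hocs : occ s with
          | none => exact absurd hocs hs
          | some c =>
            cases hoct : occ t with
            | none => exact absurd hoct ht
            | some d =>
              simp only [hocs, hoct, Option.getD_some] at hst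
              subst hst
              exact hInv.2.1 s t c hocs hoct
    _ ≤ k := by
        calc _ ≤ (Finset.range k).card := by
              apply Finset.card_le_card_of_injOn (fun c => c.val)
              · intro c hc; simp only [Finset.mem_coe, Finset.mem_filter] at hc; simpa using hc.2
              · intro a _ b _ hab; exact Fin.ext hab
          _ = k := Finset.card_range k

lemma park_success (hPF : IsParkingFunction f) :
    ∀ k, k ≤ n → ∃ occ, parkAux f k = some occ := by
  intro k
  induction k with
  | zero => exact fun _ => ⟨_, rfl⟩
  | succ k ih =>
    intro hk1
    have h : k < n := by omega
    obtain ⟨occ, hocc⟩ := ih (by omega)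
    have hInv := inv_of_park k occ hocc
    have hS : (Finset.univ.filter fun s => f ⟨k, h⟩ ≤ s ∧ occ s = none).Nonempty := by
      by_contra hS
      -- there is a free spot
      have hcardocc := occupied_card_le hInv
      have hsplit := Finset.card_filter_add_card_filter_not
        (s := (Finset.univ : Finset (Fin n))) (p := fun s => occ s ≠ none)
      have hfreecard : ((Finset.univ : Finset (Fin n)).filter fun s => ¬ occ s ≠ none).card ≥ n - k := by
        rw [Finset.card_univ, Fintype.card_fin] at hsplit; omega
      have hfree : ((Finset.univ : Finset (Fin n)).filter fun s => occ s = none).Nonempty := by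
        rw [← Finset.card_pos]
        calc 0 < n - k := by omega
          _ ≤ _ := by
            refine le_trans hfreecard (le_of_eq ?_)
            congr 1
            ext s
            simp
      set Free := (Finset.univ : Finset (Fin n)).filter fun s => occ s = none with hFree
      set s₀ := Free.max' hfree with hs₀
      have hs₀free : occ s₀ = none := (Finset.mem_filter.1 (Free.max'_mem hfree)).2
      have hall : ∀ t : Fin n, s₀ < t → occ t ≠ none := by
        intro t ht hnone
        have htm : t ∈ Free := Finset.mem_filter.2 ⟨Finset.mem_univ _, hnone⟩
        exact absurd ht (not_lt.2 (Free.le_max' t htm))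
      -- cars in spots above s₀ have preference above s₀
      have hpref : ∀ t : Fin n, s₀ < t → ∀ c, occ t = some c → s₀ < f c := by
        intro t ht c hc
        by_contra hle
        push_neg at hle
        obtain ⟨d, hd, _⟩ := hInv.2.2.2 t c hc s₀ hle ht
        rw [hs₀free] at hd; simp at hd
      -- the preference of car k is above s₀
      have hk0 : s₀ < f ⟨k, h⟩ := by
        by_contra hle
        push_neg at hle
        exact hS ⟨s₀, by simp [hle, hs₀free]⟩
      -- count cars preferring spots above s₀
      have hbig : n - 1 - s₀.val + 1 ≤
          ((Finset.univ : Finset (Fin n)).filter fun j => s₀ < f j).card := by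
        have himage : insert ⟨k, h⟩ ((Finset.Ioi s₀).image (fun t => (occ t).getD ⟨0, by omega⟩))
            ⊆ (Finset.univ : Finset (Fin n)).filter fun j => s₀ < f j := by
          intro c hc
          simp only [Finset.mem_insert, Finset.mem_image, Finset.mem_Ioi] at hc
          simp only [Finset.mem_filter, Finset.mem_univ, true_and]
          rcases hc with rfl | ⟨t, ht, rfl⟩
          · exact hk0
          · cases hoct : occ t with
            | none => exact absurd hoct (hall t ht)
            | some c => simp only [hoct, Option.getD_some]; exact hpref t ht c hoct
        have hcard : (insert (⟨k, h⟩ : Fin n) ((Finset.Ioi s₀).image (fun t => (occ t).getD ⟨0, by omega⟩))).card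
            = (n - 1 - s₀.val) + 1 := by
          rw [Finset.card_insert_of_notMem, Finset.card_image_of_injOn]
          · rw [Fin.card_Ioi]
          · intro s hs t ht hst
            simp only [Finset.mem_coe, Finset.mem_Ioi] at hs ht
            cases hocs : occ s with
            | none => exact absurd hocs (hall s hs)
            | some c =>
              cases hoct : occ t with
              | none => exact absurd hoct (hall t ht)
              | some d =>
                simp only [hocs, hoct, Option.getD_some] at hst
                subst hst
                exact hInv.2.1 s t c hocs hoct
          · intro hmem
            simp only [Finset.mem_image, Finset.mem_Ioi] at hmem
            obtain ⟨t, ht, hval⟩ := hmem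
            cases hoct : occ t with
            | none => exact absurd hoct (hall t ht)
            | some c =>
              rw [hoct] at hval
              simp only [Option.getD_some] at hval
              have := (hInv.1 t c hoct).1
              rw [hval] at this
              simp at this
        calc (n - 1 - s₀.val) + 1 = _ := hcard.symm
          _ ≤ _ := Finset.card_le_card himage
      -- contradiction with the parking function property at s₀
      have hPF0 := hPF s₀
      have hsplit2 := Finset.card_filter_add_card_filter_not
        (s := (Finset.univ : Finset (Fin n))) (p := fun j => s₀ < f j)
      have : ((Finset.univ : Finset (Fin n)).filter fun j => ¬ s₀ < f j).card =
          ((Finset.univ : Finset (Fin n)).filter fun j => f j ≤ s₀).card := by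
        congr 1; ext j; simp
      rw [this, Finset.card_univ, Fintype.card_fin] at hsplit2
      have hs0n := s₀.2
      omega
    exact ⟨_, by rw [parkAux, hocc, Option.bind_some, dif_pos h, dif_pos hS]⟩

lemma exists_perm (hPF : IsParkingFunction f) :
    ∃ ρ : Equiv.Perm (Fin n), IsParkingPerm f ρ := by
  obtain ⟨occ, hocc⟩ := park_success hPF n le_rfl
  have hInv := inv_of_park n occ hocc
  -- every spot is occupied
  have hcard : ((Finset.univ : Finset (Fin n)).filter fun s => occ s ≠ none).card = n := by
    have hle := occupied_card_le hInv
    have hge : n ≤ ((Finset.univ : Finset (Fin n)).filter fun s => occ s ≠ none).card := by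
      have : ∀ c : Fin n, ∃ s, occ s = some c := fun c => hInv.2.2.1 c c.2
      choose g hg using this
      calc n = (Finset.univ : Finset (Fin n)).card := by rw [Finset.card_univ, Fintype.card_fin]
        _ ≤ _ := by
          apply Finset.card_le_card_of_injOn g
          · intro c _
            simp only [Finset.mem_coe, Finset.mem_filter, Finset.mem_univ, true_and]
            rw [hg c]; simp
          · intro c _ d _ hcd
            have h1 := hg c
            rw [hcd, hg d] at h1
            exact (Option.some_injective _ h1).symm
    omega
  have hallocc : ∀ s, occ s ≠ none := by
    have : ((Finset.univ : Finset (Fin n)).filter fun s => occ s ≠ none) = Finset.univ := by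
      apply Finset.eq_univ_of_card
      rw [hcard, Fintype.card_fin]
    intro s
    have hs : s ∈ (Finset.univ : Finset (Fin n)).filter fun s => occ s ≠ none := by
      rw [this]; exact Finset.mem_univ s
    exact (Finset.mem_filter.1 hs).2
  rcases Nat.eq_zero_or_pos n with rfl | hn
  · exact ⟨Equiv.refl _, by
      rw [IsParkingPerm, hocc]
      congr 1
      funext s
      exact absurd s.2 (by omega)⟩
  have hbij : Function.Bijective (fun s => (occ s).getD ⟨0, hn⟩) := by
    rw [Fintype.bijective_iff_injective_and_card]
    refine ⟨?_, rfl⟩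
    intro s t hst
    cases hocs : occ s with
    | none => exact absurd hocs (hallocc s)
    | some c =>
      cases hoct : occ t with
      | none => exact absurd hoct (hallocc t)
      | some d =>
        simp only [hocs, hoct, Option.getD_some] at hst
        subst hst
        exact hInv.2.1 s t c hocs hoct
  refine ⟨Equiv.ofBijective _ hbij, ?_⟩
  rw [IsParkingPerm, hocc]
  congr 1
  funext s
  cases hocs : occ s with
  | none => exact absurd hocs (hallocc s)
  | some c => simp [Equiv.ofBijective_apply, hocs]

lemma perm_facts {ρ : Equiv.Perm (Fin n)} (hρ : IsParkingPerm f ρ) :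
    (∀ s, f (ρ s) ≤ s) ∧ (∀ s u, f (ρ s) ≤ u → u < s → ρ u < ρ s) := by
  have hInv := inv_of_park n _ hρ
  constructor
  · intro s
    exact (hInv.1 s (ρ s) rfl).2
  · intro s u h1 h2
    obtain ⟨d, hd, hdlt⟩ := hInv.2.2.2 s (ρ s) rfl u h1 h2
    have : ρ u = d := Option.some_injective _ hd
    rw [this]; exact hdlt

lemma perm_isPF {ρ : Equiv.Perm (Fin n)} (hρ : IsParkingPerm f ρ) :
    IsParkingFunction f := by
  intro i
  have hsub : (Finset.Iic i).image ρ ⊆ (Finset.univ.filter fun j => f j ≤ i) := by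
    intro c hc
    simp only [Finset.mem_image, Finset.mem_Iic] at hc
    obtain ⟨s, hs, rfl⟩ := hc
    simp only [Finset.mem_filter, Finset.mem_univ, true_and]
    exact le_trans ((perm_facts hρ).1 s) hs
  calc i.val + 1 = (Finset.Iic i).card := (Fin.card_Iic i).symm
    _ = ((Finset.Iic i).image ρ).card := (Finset.card_image_of_injective _ ρ.injective).symm
    _ ≤ _ := Finset.card_le_card hsub

lemma bound_iff {ρ : Equiv.Perm (Fin n)} (hρ : IsParkingPerm f ρ) :
    (∀ i : Fin n, n ≤ (ρ i).val + i.val + 2) ↔ (∀ c : Fin n, n ≤ (f c).val + c.val + 2) := by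
  obtain ⟨hle, hrun⟩ := perm_facts hρ
  constructor
  · intro hb c
    obtain ⟨s, rfl⟩ := ρ.surjective c
    rcases eq_or_lt_of_le (hle s) with heq | hlt
    · have h0 := hb s
      have h3 : (f (ρ s)).val = s.val := congrArg Fin.val heq
      omega
    · have h1 := hrun s (f (ρ s)) le_rfl hlt
      have h2 := hb (f (ρ s))
      simp only [Fin.lt_def] at h1
      omega
  · intro hb i
    have h1 := hb (ρ i)
    have h2 := hle i
    simp only [Fin.le_def] at h2
    omega

end ParkWork
namespace AvWork

lemma strictMono_triple {n : ℕ} {a b c : Fin n} (h1 : a < b) (h2 : b < c) :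
    StrictMono ![a, b, c] := by
  intro x y hxy
  fin_cases x <;> fin_cases y <;>
    first
      | exact absurd hxy (by decide)
      | simpa using h1
      | simpa using h2
      | simpa using h1.trans h2


lemma two_after {n : ℕ} (ρ : Equiv.Perm (Fin n)) (hav : AvoidsAll ρ [p123, p132])
    {i j k : Fin n} (hij : i < j) (hjk : j < k) (h1 : ρ i < ρ j) (h2 : ρ i < ρ k) : False := by
  have hv1 : (ρ i).val < (ρ j).val := h1
  have hv2 : (ρ i).val < (ρ k).val := h2
  have hne : ρ j ≠ ρ k := fun h => absurd (ρ.injective h) (ne_of_lt hjk)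
  rcases lt_or_gt_of_ne hne with hlt | hlt
  · have hv3 : (ρ j).val < (ρ k).val := hlt
    refine hav p123 (by simp) ⟨![i, j, k], strictMono_triple hij hjk, ?_⟩
    intro a b
    fin_cases a <;> fin_cases b
    · exact iff_of_false (by decide) (lt_irrefl _)
    · exact iff_of_true (by decide) h1
    · exact iff_of_true (by decide) h2
    · exact iff_of_false (by decide) (lt_asymm h1)
    · exact iff_of_false (by decide) (lt_irrefl _)
    · exact iff_of_true (by decide) hlt
    · exact iff_of_false (by decide) (lt_asymm h2)
    · exact iff_of_false (by decide) (lt_asymm hlt)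
    · exact iff_of_false (by decide) (lt_irrefl _)
  · have hv3 : (ρ k).val < (ρ j).val := hlt
    refine hav p132 (by simp) ⟨![i, j, k], strictMono_triple hij hjk, ?_⟩
    intro a b
    fin_cases a <;> fin_cases b
    · exact iff_of_false (by decide) (lt_irrefl _)
    · exact iff_of_true (by decide) h1
    · exact iff_of_true (by decide) h2
    · exact iff_of_false (by decide) (lt_asymm h1)
    · exact iff_of_false (by decide) (lt_irrefl _)
    · exact iff_of_false (by decide) (lt_asymm hlt)
    · exact iff_of_false (by decide) (lt_asymm h2)
    · exact iff_of_true (by decide) hlt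
    · exact iff_of_false (by decide) (lt_irrefl _)

lemma avoids_iff {n : ℕ} (ρ : Equiv.Perm (Fin n)) :
    AvoidsAll ρ [p123, p132] ↔ ∀ i : Fin n, n ≤ (ρ i).val + i.val + 2 := by
  constructor
  · intro hav
    by_contra hcon
    push_neg at hcon
    obtain ⟨i, hi⟩ := hcon
    -- there are at least two positions after i with larger values
    set S := (Finset.univ : Finset (Fin n)).filter (fun j => i < j ∧ ρ i < ρ j) with hSdef
    have hcardV : ((Finset.univ : Finset (Fin n)).filter fun j => ρ i < ρ j).card
        = n - 1 - (ρ i).val := by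
      rw [← Fin.card_Ioi (ρ i)]
      apply Finset.card_bij (fun j _ => ρ j)
      · intro j hj
        simp only [Finset.mem_filter] at hj
        simpa using hj.2
      · intro a _ b _ hab
        exact ρ.injective hab
      · intro v hv
        refine ⟨ρ.symm v, ?_, by simp⟩
        simp only [Finset.mem_filter, Finset.mem_univ, true_and, Equiv.apply_symm_apply]
        simpa using hv
    have hsub : ((Finset.univ : Finset (Fin n)).filter fun j => ρ i < ρ j)
        ⊆ S ∪ Finset.Iio i := by
      intro j hj
      simp only [Finset.mem_filter, Finset.mem_univ, true_and] at hj
      simp only [Finset.mem_union, hSdef, Finset.mem_filter, Finset.mem_univ, true_and,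
        Finset.mem_Iio]
      rcases lt_trichotomy i j with h | h | h
      · exact Or.inl ⟨h, hj⟩
      · exact absurd hj (by rw [h]; exact lt_irrefl _)
      · exact Or.inr h
    have hScard : 2 ≤ S.card := by
      have h1 := Finset.card_le_card hsub
      have h2 := Finset.card_union_le S (Finset.Iio i)
      rw [hcardV] at h1
      rw [Fin.card_Iio] at h2
      omega
    obtain ⟨a, ha, b, hb, hab⟩ := Finset.one_lt_card.1 (show 1 < S.card by omega)
    simp only [hSdef, Finset.mem_filter, Finset.mem_univ, true_and] at ha hb
    rcases lt_or_gt_of_ne hab with hlt | hlt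
    · exact two_after ρ hav ha.1 hlt ha.2 hb.2
    · exact two_after ρ hav hb.1 hlt hb.2 ha.2
  · intro hbnd σ hσ hcont
    obtain ⟨g, hg, hpat⟩ := hcont
    have h01 : g 0 < g 1 := hg (by decide)
    have h12 : g 1 < g 2 := hg (by decide)
    have hij : ρ (g 0) < ρ (g 1) ∧ ρ (g 0) < ρ (g 2) := by
      simp only [List.mem_cons, List.mem_singleton] at hσ
      rcases hσ with rfl | hσ
      · exact ⟨(hpat 0 1).1 (by simp [p123, Equiv.ofBijective_apply]),
          (hpat 0 2).1 (by simp [p123, Equiv.ofBijective_apply])⟩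
      · rcases hσ with rfl | h
        · exact ⟨(hpat 0 1).1 (by simp [p132, Equiv.ofBijective_apply]),
            (hpat 0 2).1 (by simp [p132, Equiv.ofBijective_apply])⟩
        · exact absurd h List.not_mem_nil
    -- pigeonhole
    set i := g 0
    set j := g 1
    set k := g 2
    set τ : Fin n → ℕ := fun p => n - 1 - (ρ p).val with hτ
    have hτinj : Function.Injective τ := by
      intro p q hpq
      simp only [hτ] at hpq
      have hp := (ρ p).2
      have hq := (ρ q).2
      exact ρ.injective (Fin.ext (by omega))
    have hA : insert (τ j) (insert (τ k) ((Finset.Iic i).image τ)) ⊆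
        Finset.range (i.val + 2) := by
      intro x hx
      simp only [Finset.mem_insert, Finset.mem_image, Finset.mem_Iic, Finset.mem_range] at hx ⊢
      have hbi := hbnd i
      rcases hx with rfl | rfl | ⟨p, hp, rfl⟩
      · have := hij.1
        have h2 := (ρ (g 1)).2
        simp only [hτ, Fin.lt_def] at this ⊢
        omega
      · have := hij.2
        have h2 := (ρ (g 2)).2
        simp only [hτ, Fin.lt_def] at this ⊢
        omega
      · have hbp := hbnd p
        have : p.val ≤ i.val := hp
        simp only [hτ]
        omega
    have hcards : (insert (τ j) (insert (τ k) ((Finset.Iic i).image τ))).card = i.val + 3 := by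
      rw [Finset.card_insert_of_notMem, Finset.card_insert_of_notMem,
        Finset.card_image_of_injective _ hτinj, Fin.card_Iic]
      · intro hmem
        simp only [Finset.mem_image, Finset.mem_Iic] at hmem
        obtain ⟨p, hp, hpτ⟩ := hmem
        have := hτinj hpτ
        subst this
        exact absurd (lt_of_le_of_lt hp (h01.trans h12)) (lt_irrefl _)
      · intro hmem
        simp only [Finset.mem_insert, Finset.mem_image, Finset.mem_Iic] at hmem
        rcases hmem with h | ⟨p, hp, hpτ⟩
        · exact absurd (hτinj h) (ne_of_lt h12)
        · have := hτinj hpτ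
          subst this
          exact absurd (lt_of_le_of_lt hp h01) (lt_irrefl _)
    have := Finset.card_le_card hA
    rw [hcards, Finset.card_range] at this
    omega

end AvWork

namespace GlueWork

variable {n : ℕ} {f : Fin n → Fin n}

/-- bound condition on preferences -/
def Rb {n : ℕ} (f : Fin n → Fin n) : Prop := ∀ c : Fin n, n ≤ (f c).val + c.val + 2

/-- pairwise (disjointness) condition -/
def Rp {n : ℕ} (f : Fin n → Fin n) : Prop :=
  ∀ i c c' : Fin n, n ≤ c.val + i.val + 2 → i < f c → n ≤ c'.val + i.val + 2 → i < f c' → c = c'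

lemma pf_iff (hb : Rb f) : IsParkingFunction f ↔ Rp f := by
  have key : ∀ i : Fin n,
      ((Finset.univ : Finset (Fin n)).filter fun c => i < f c).card =
      ((Finset.univ : Finset (Fin n)).filter fun c => n ≤ c.val + i.val + 2 ∧ i < f c).card
        + (n - i.val - 2) := by
    intro i
    have hsplit : ((Finset.univ : Finset (Fin n)).filter fun c => i < f c) =
        ((Finset.univ : Finset (Fin n)).filter fun c => n ≤ c.val + i.val + 2 ∧ i < f c) ∪
        ((Finset.univ : Finset (Fin n)).filter fun c => c.val < n - i.val - 2) := by
      ext c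
      simp only [Finset.mem_filter, Finset.mem_univ, true_and, Finset.mem_union]
      constructor
      · intro hc
        rcases Nat.lt_or_ge (c.val + i.val + 2) n with h | h
        · exact Or.inr (by omega)
        · exact Or.inl ⟨h, hc⟩
      · intro hc
        rcases hc with ⟨_, hc⟩ | hc
        · exact hc
        · have hbc := hb c
          simp only [Fin.lt_def] at *
          omega
    have hdisj : Disjoint
        ((Finset.univ : Finset (Fin n)).filter fun c => n ≤ c.val + i.val + 2 ∧ i < f c)
        ((Finset.univ : Finset (Fin n)).filter fun c => c.val < n - i.val - 2) := by
      rw [Finset.disjoint_left]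
      intro c hc1 hc2
      simp only [Finset.mem_filter, Finset.mem_univ, true_and] at hc1 hc2
      omega
    rw [hsplit, Finset.card_union_of_disjoint hdisj,
      ParkWork.card_fin_lt (show n - i.val - 2 ≤ n by omega)]
  have hcompl : ∀ i : Fin n,
      ((Finset.univ : Finset (Fin n)).filter fun c => f c ≤ i).card
        + ((Finset.univ : Finset (Fin n)).filter fun c => i < f c).card = n := by
    intro i
    have := Finset.card_filter_add_card_filter_not
      (s := (Finset.univ : Finset (Fin n))) (p := fun c => f c ≤ i)
    rw [Finset.card_univ, Fintype.card_fin] at this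
    have heq : ((Finset.univ : Finset (Fin n)).filter fun c => ¬ f c ≤ i) =
        ((Finset.univ : Finset (Fin n)).filter fun c => i < f c) := by
      ext c
      simp [not_le]
    rw [heq] at this
    exact this
  constructor
  · intro hPF i c c' h1 h2 h3 h4
    have hle : ((Finset.univ : Finset (Fin n)).filter
        fun c => n ≤ c.val + i.val + 2 ∧ i < f c).card ≤ 1 := by
      have hk := key i
      have hc := hcompl i
      have hp := hPF i
      have := i.2
      omega
    exact Finset.card_le_one.1 hle c (by simp [h1, h2]) c' (by simp [h3, h4])
  · intro hR i
    have hle : ((Finset.univ : Finset (Fin n)).filter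
        fun c => n ≤ c.val + i.val + 2 ∧ i < f c).card ≤ 1 := by
      apply Finset.card_le_one.2
      intro a ha b hbb
      simp only [Finset.mem_filter, Finset.mem_univ, true_and] at ha hbb
      exact hR i a b ha.1 ha.2 hbb.1 hbb.2
    rcases Nat.lt_or_ge (i.val + 1) n with hi | hi
    · have hk := key i
      have hc := hcompl i
      omega
    · -- i is the last spot: every car prefers a spot ≤ i
      have : ((Finset.univ : Finset (Fin n)).filter fun c => f c ≤ i) = Finset.univ := by
        apply Finset.filter_true_of_mem
        intro c _
        have h1 := (f c).2
        have h2 := i.2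
        simp only [Fin.le_def]
        omega
      rw [this, Finset.card_univ, Fintype.card_fin]
      omega

/-- lengths extracted from a preference function -/
def Lof {n : ℕ} (f : Fin n → Fin n) : ℕ → ℕ :=
  fun c => if h : c < n - 1 then (f ⟨c, by omega⟩).val - (n - 2 - c) else 0

lemma lof_bound (hb : Rb f) (c : ℕ) : Lof f c ≤ c + 1 := by
  rw [Lof]
  split
  · next h =>
    have h2 := (f ⟨c, by omega⟩).2
    omega
  · omega

lemma lof_pair (hn : 1 ≤ n) (hb : Rb f) (hp : Rp f) :
    ∀ c' c : ℕ, c' < c → c < c' + Lof f c → Lof f c' = 0 := by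
  intro c' c hcc hlt
  rw [Lof] at hlt
  split at hlt
  swap
  · omega
  next hcn =>
    have hbc := hb ⟨c, by omega⟩
    simp only [Fin.lt_def] at *
    have hfc : n - 2 - c' < (f ⟨c, by omega⟩).val := by omega
    rw [Lof]
    split
    swap
    · rfl
    next hc'n =>
      have hbc' := hb ⟨c', by omega⟩
      by_contra hne
      have hfc' : n - 2 - c' < (f ⟨c', by omega⟩).val := by omega
      have := hp ⟨n - 2 - c', by omega⟩ ⟨c, by omega⟩ ⟨c', by omega⟩
        (by simp; omega) (by simp [Fin.lt_def]; omega)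
        (by simp; omega) (by simp [Fin.lt_def]; omega)
      have : c = c' := congrArg Fin.val this
      omega

lemma lof_good (hn : 1 ≤ n) (hb : Rb f) (hp : Rp f) : Good (n - 1) (Lof f) :=
  ⟨lof_bound hb, lof_pair hn hb hp, fun c hc => by rw [Lof]; split <;> [omega; rfl]⟩

lemma lof_supp (hn : 1 ≤ n) (hb : Rb f) (hp : Rp f)
    {v : ℕ} (hv : (f ⟨n - 1, by omega⟩).val = v) :
    ∀ c, n - 1 - v ≤ c → Lof f c = 0 := by
  intro c hc
  rw [Lof]
  split
  swap
  · rfl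
  next hcn =>
    by_contra hne
    have hbc := hb ⟨c, by omega⟩
    have hfc : n - 2 - c < (f ⟨c, by omega⟩).val := by omega
    -- the last car's interval covers ground point n-2-c
    have hvpos : 1 ≤ v := by omega
    have := hp ⟨n - 2 - c, by omega⟩ ⟨n - 1, by omega⟩ ⟨c, by omega⟩
      (by simp; omega) (by simp [Fin.lt_def]; omega)
      (by simp; omega) (by simp [Fin.lt_def]; omega)
    have : n - 1 = c := congrArg Fin.val this
    omega

/-- reconstruct a preference function from a length configuration -/
def Fof (n : ℕ) (hn : 1 ≤ n) (v : ℕ) (hv : v ≤ n - 1) (L : ℕ → ℕ) (hL : ∀ c, L c ≤ c + 1) :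
    Fin n → Fin n :=
  fun c => if h : c.val < n - 1 then ⟨n - 2 - c.val + L c.val, by have := hL c.val; omega⟩
    else ⟨v, by omega⟩

lemma fof_facts {n : ℕ} (hn : 1 ≤ n) (v : ℕ) (hv : v ≤ n - 1) (L : ℕ → ℕ)
    (hG : Good (n - 1) L) (hsupp : ∀ c, n - 1 - v ≤ c → L c = 0) :
    Rb (Fof n hn v hv L hG.1) ∧ Rp (Fof n hn v hv L hG.1) := by
  constructor
  · intro c
    rw [Fof]
    split <;> simp <;> omega
  · intro i c c' h1 h2 h3 h4
    -- first a helper: no two distinct "regular" cars can both cover i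
    have hreg : ∀ d d' : Fin n, d.val < n - 1 → d'.val < n - 1 → d'.val < d.val →
        n ≤ d.val + i.val + 2 → (i < Fof n hn v hv L hG.1 d) →
        n ≤ d'.val + i.val + 2 → (i < Fof n hn v hv L hG.1 d') → False := by
      intro d d' hd hd' hdd h1 h2 h3 h4
      rw [Fof] at h2 h4
      rw [dif_pos hd] at h2
      rw [dif_pos hd'] at h4
      simp only [Fin.lt_def] at h2 h4
      have hzero := hG.2.1 d'.val d.val hdd (by omega)
      omega
    have hlast : ∀ d' : Fin n, d'.val < n - 1 →
        n ≤ d'.val + i.val + 2 → (i < Fof n hn v hv L hG.1 d') →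
        (i.val < v) → False := by
      intro d' hd' h3 h4 hiv
      rw [Fof, dif_pos hd'] at h4
      simp only [Fin.lt_def] at h4
      have hzero := hsupp d'.val (by omega)
      omega
    by_cases hc : c.val < n - 1 <;> by_cases hc' : c'.val < n - 1
    · rcases lt_trichotomy c'.val c.val with h | h | h
      · exact absurd (hreg c c' hc hc' h h1 h2 h3 h4) (fun hf => hf)
      · exact Fin.ext h.symm
      · exact absurd (hreg c' c hc' hc h h3 h4 h1 h2) (fun hf => hf)
    · -- c' is the last car
      have hcv : i.val < v := by
        have : Fof n hn v hv L hG.1 c' = ⟨v, by omega⟩ := by rw [Fof, dif_neg hc']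
        rw [this] at h4
        exact h4
      exact absurd (hlast c hc h1 h2 hcv) (fun hf => hf)
    · have hcv : i.val < v := by
        have : Fof n hn v hv L hG.1 c = ⟨v, by omega⟩ := by rw [Fof, dif_neg hc]
        rw [this] at h2
        exact h2
      exact absurd (hlast c' hc' h3 h4 hcv) (fun hf => hf)
    · apply Fin.ext
      have := c.2
      have := c'.2
      omega

/-- The master equivalence. -/
noncomputable def bigEquiv (n : ℕ) (hn : 1 ≤ n) :
    {f : Fin n → Fin n // Rb f ∧ Rp f} ≃
      {L : ℕ → ℕ // Good (n - 1) L} ⊕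
      {p : Fin (n - 1) × (ℕ → ℕ) // Good (n - 2 - p.1.val) p.2} where
  toFun := fun F =>
    if h0 : (F.1 ⟨n - 1, by omega⟩).val = 0 then
      .inl ⟨Lof F.1, lof_good hn F.2.1 F.2.2⟩
    else
      .inr ⟨(⟨(F.1 ⟨n - 1, by omega⟩).val - 1, by
          have h2 := (F.1 ⟨n - 1, by omega⟩).2
          have hbb := F.2.1 ⟨n - 1, by omega⟩
          simp only at hbb
          omega⟩, Lof F.1), by
        refine ⟨lof_bound F.2.1, lof_pair hn F.2.1 F.2.2, ?_⟩
        intro c hc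
        have hc' : n - 2 - ((F.1 ⟨n - 1, by omega⟩).val - 1) ≤ c := hc
        exact lof_supp hn F.2.1 F.2.2 rfl c (by omega)⟩
  invFun := fun x =>
    match x with
    | .inl L => ⟨Fof n hn 0 (by omega) L.1 L.2.1,
        fof_facts hn 0 (by omega) L.1 L.2 (fun c hc => L.2.2.2 c (by omega))⟩
    | .inr p => ⟨Fof n hn (p.1.1.val + 1) (by have := p.1.1.2; omega) p.1.2 p.2.1,
        fof_facts hn (p.1.1.val + 1) (by have := p.1.1.2; omega) p.1.2
          ⟨p.2.1, p.2.2.1, fun c hc => p.2.2.2 c (by omega)⟩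
          (fun c hc => p.2.2.2 c (by omega))⟩
  left_inv := by
    rintro ⟨f, hb, hp⟩
    by_cases h0 : (f ⟨n - 1, by omega⟩).val = 0
    · simp only [dif_pos h0]
      apply Subtype.ext
      show Fof n hn 0 (Nat.zero_le _) (Lof f) (lof_good hn hb hp).1 = f
      funext c
      rw [Fof]
      split
      · next h =>
        apply Fin.ext
        simp only [Lof, dif_pos h]
        have hbc := hb c
        have : (⟨c.val, by omega⟩ : Fin n) = c := Fin.ext rfl
        rw [this]
        omega
      · next h =>
        apply Fin.ext
        have hceq : c = ⟨n - 1, by omega⟩ := Fin.ext (show c.val = n - 1 by have := c.2; omega)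
        have h2 : f c = f ⟨n - 1, by omega⟩ := congrArg f hceq
        rw [h2]
        show 0 = (f ⟨n - 1, by omega⟩).val
        omega
    · simp only [dif_neg h0]
      apply Subtype.ext
      have hless : (f ⟨n - 1, by omega⟩).val - 1 + 1 ≤ n - 1 := by
        have := (f ⟨n - 1, by omega⟩).2
        omega
      show Fof n hn ((f ⟨n - 1, by omega⟩).val - 1 + 1) hless (Lof f) (lof_good hn hb hp).1 = f
      funext c
      rw [Fof]
      split
      · next h =>
        apply Fin.ext
        simp only [Lof, dif_pos h]
        have hbc := hb c
        have : (⟨c.val, by omega⟩ : Fin n) = c := Fin.ext rfl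
        rw [this]
        omega
      · next h =>
        apply Fin.ext
        have hceq : c = ⟨n - 1, by omega⟩ := Fin.ext (show c.val = n - 1 by have := c.2; omega)
        have h2 : f c = f ⟨n - 1, by omega⟩ := congrArg f hceq
        rw [h2]
        show (f ⟨n - 1, by omega⟩).val - 1 + 1 = (f ⟨n - 1, by omega⟩).val
        omega
  right_inv := by
    rintro (⟨L, hL⟩ | ⟨⟨b, L⟩, hL⟩)
    · have hval : (Fof n hn 0 (by omega) L hL.1 ⟨n - 1, by omega⟩).val = 0 := by
        rw [Fof, dif_neg (lt_irrefl _)]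
      dsimp only
      split_ifs with h0
      · congr 1
        apply Subtype.ext
        funext c
        simp only [Lof]
        split
        · next h =>
          rw [Fof, dif_pos (show (⟨c, by omega⟩ : Fin n).val < n - 1 from h)]
          simp
        · next h =>
          exact (hL.2.2 c (by omega)).symm
      · exact absurd hval h0
    · have hval : ∀ (pf1 : b.val + 1 ≤ n - 1) (pf2 : ∀ c, L c ≤ c + 1),
          (Fof n hn (b.val + 1) pf1 L pf2 ⟨n - 1, by omega⟩).val = b.val + 1 := by
        intro pf1 pf2
        rw [Fof, dif_neg (lt_irrefl _)]
      dsimp only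
      split_ifs with h0
      · rw [hval _ _] at h0
        simp at h0
      · congr 1
        apply Subtype.ext
        apply Prod.ext
        · apply Fin.ext
          show (Fof n hn (b.val + 1) _ L _ ⟨n - 1, by omega⟩).val - 1 = b.val
          rw [hval _ _]
          omega
        · show Lof (Fof n hn (b.val + 1) _ L _) = L
          funext c
          simp only [Lof]
          split
          · next h =>
            rw [Fof, dif_pos (show (⟨c, by omega⟩ : Fin n).val < n - 1 from h)]
            simp
          · next h =>
            exact (hL.2.2 c (by omega)).symm

end GlueWork

theorem stmt16 (n : ℕ) (hn : 1 ≤ n) :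
    ((pk n [p123, p132] : ℝ) =
      1 / Real.sqrt 5 * ((3 + Real.sqrt 5) / 2) ^ n
        - 1 / Real.sqrt 5 * ((3 - Real.sqrt 5) / 2) ^ n) ∧
    pk n [p123, p132] = Nat.fib (2 * n) := by
  have hfib : pk n [p123, p132] = Nat.fib (2 * n) := by
    rw [pk]
    have hpred : ∀ f : Fin n → Fin n,
        (IsParkingFunction f ∧ ∃ ρ : Equiv.Perm (Fin n), IsParkingPerm f ρ ∧
          AvoidsAll ρ [p123, p132]) ↔ (GlueWork.Rb f ∧ GlueWork.Rp f) := by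
      intro f
      constructor
      · rintro ⟨hPF, ρ, hρ, hav⟩
        have hb : GlueWork.Rb f := (ParkWork.bound_iff hρ).1 ((AvWork.avoids_iff ρ).1 hav)
        exact ⟨hb, (GlueWork.pf_iff hb).1 hPF⟩
      · rintro ⟨hb, hp⟩
        have hPF : IsParkingFunction f := (GlueWork.pf_iff hb).2 hp
        obtain ⟨ρ, hρ⟩ := ParkWork.exists_perm hPF
        exact ⟨hPF, ρ, hρ, (AvWork.avoids_iff ρ).2 ((ParkWork.bound_iff hρ).2 hb)⟩
    rw [Nat.card_congr (Equiv.subtypeEquivRight hpred),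
      Nat.card_congr (GlueWork.bigEquiv n hn)]
    have : Finite {p : Fin (n - 1) × (ℕ → ℕ) // Good (n - 2 - p.1.val) p.2} :=
      Finite.of_equiv _
        (pairSigma (fun (a : Fin (n - 1)) (L : ℕ → ℕ) => Good (n - 2 - a.val) L)).symm
    rw [Nat.card_sum,
      Nat.card_congr (pairSigma (fun (a : Fin (n - 1)) (L : ℕ → ℕ) => Good (n - 2 - a.val) L)),
      nat_card_sigma]
    show cC (n - 1) + ∑ b : Fin (n - 1), cC (n - 2 - b.val) = _
    have hs : ∑ b : Fin (n - 1), cC (n - 2 - b.val) = Nat.fib (2 * (n - 1)) := by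
      rw [Fin.sum_univ_eq_sum_range (fun b => cC (n - 2 - b))]
      have h1 : ∀ b ∈ Finset.range (n - 1), cC (n - 2 - b) = Nat.fib (2 * (n - 2 - b) + 1) :=
        fun b hb => cC_fib (n - 2 - b)
      rw [Finset.sum_congr rfl h1]
      have hconv : ∀ x ∈ Finset.range (n - 1),
          Nat.fib (2 * (n - 2 - x) + 1) = Nat.fib (2 * ((n - 1) - 1 - x) + 1) := by
        intro x hx
        have hx2 : n - 2 - x = (n - 1) - 1 - x := by omega
        rw [hx2]
      rw [Finset.sum_congr rfl hconv,
        Finset.sum_range_reflect (fun j => Nat.fib (2 * j + 1)) (n - 1),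
        fib_odd_sum]
    rw [hs, cC_fib]
    have h2 : 2 * (n - 1) + 1 = 2 * n - 1 := by omega
    have h3 : 2 * n = (2 * (n - 1)) + 1 + 1 := by omega
    rw [h3, Nat.fib_add_two]
    omega
  refine ⟨?_, hfib⟩
  rw [hfib, Real.coe_fib_eq]
  have h5 : Real.sqrt 5 ^ 2 = 5 := Real.sq_sqrt (by norm_num)
  have hφ : (3 + Real.sqrt 5) / 2 = Real.goldenRatio ^ 2 := by
    rw [Real.goldenRatio]
    field_simp
    nlinarith [h5]
  have hψ : (3 - Real.sqrt 5) / 2 = Real.goldenConj ^ 2 := by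
    rw [Real.goldenConj]
    field_simp
    nlinarith [h5]
  rw [hφ, hψ, ← pow_mul, ← pow_mul]
  rw [show Real.goldenRatio ^ (2 * n) = Real.goldenRatio ^ (2 * n) from rfl]
  ring
end
end

section
/- The number of parking functions of size n whose parking permutation avoids both 213 and 312 equals ∑_{k=0}^{n−1} binom(n−1, k)·(k+1)!. -/
open Finset

noncomputable section

/-- `Cond f ρ`: the direct characterization of "the outcome of `f` is `ρ`". -/
def Cond {n : ℕ} (f : Fin n → Fin n) (ρ : Equiv.Perm (Fin n)) : Prop :=
  ∀ s : Fin n, f (ρ s) ≤ s ∧ ∀ t : Fin n, f (ρ s) ≤ t → t < s → ρ t < ρ s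

def occK {n : ℕ} (ρ : Equiv.Perm (Fin n)) (k : ℕ) : Fin n → Option (Fin n) :=
  fun s => if (ρ s).val < k then some (ρ s) else none

lemma parkAux_of_cond {n : ℕ} {f : Fin n → Fin n} {ρ : Equiv.Perm (Fin n)}
    (hc : Cond f ρ) : ∀ k, k ≤ n → parkAux f k = some (occK ρ k) := by
  intro k
  induction k with
  | zero =>
    intro _
    simp only [parkAux]
    congr 1
  | succ k ih =>
    intro hk1
    have h : k < n := hk1
    set c : Fin n := ⟨k, h⟩ with hcdef
    set s : Fin n := ρ.symm c with hsdef
    have hρs : ρ s = c := ρ.apply_symm_apply c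
    have hS : s ∈ (Finset.univ.filter fun t => f c ≤ t ∧ occK ρ k t = none) := by
      refine Finset.mem_filter.2 ⟨Finset.mem_univ _, ?_, ?_⟩
      · have := (hc s).1
        rwa [hρs] at this
      · simp [occK, hρs, hcdef]
    have hmin : ∀ t ∈ (Finset.univ.filter fun t => f c ≤ t ∧ occK ρ k t = none), s ≤ t := by
      intro t ht
      by_contra hts
      push_neg at hts
      obtain ⟨-, hft, hocc⟩ := Finset.mem_filter.1 ht
      have := (hc s).2 t (by rwa [hρs]) hts
      rw [hρs] at this
      have : (ρ t).val < k := this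
      simp [occK, this] at hocc
    rw [parkAux, ih (le_of_lt h), Option.bind_some, dif_pos h]
    rw [dif_pos ⟨s, hS⟩]
    have hmineq : (Finset.univ.filter fun t => f c ≤ t ∧ occK ρ k t = none).min' ⟨s, hS⟩ = s :=
      le_antisymm (Finset.min'_le _ _ hS) (Finset.le_min' _ _ _ hmin)
    rw [hmineq]
    congr 1
    funext t
    by_cases hts : t = s
    · subst hts
      simp [Function.update_self, occK, hρs, hcdef]
    · rw [Function.update_of_ne hts]
      have hne : ρ t ≠ c := fun hcon => hts (by rw [← hρs] at hcon; exact ρ.injective hcon)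
      have hne' : (ρ t).val ≠ k := fun hcon => hne (Fin.ext hcon)
      simp only [occK]
      by_cases hlt : (ρ t).val < k
      · rw [if_pos hlt, if_pos (Nat.lt_succ_of_lt hlt)]
      · rw [if_neg hlt, if_neg (by omega)]

lemma parkAux_isSome_of_succ {n : ℕ} {f : Fin n → Fin n} {k : ℕ}
    (h : (parkAux f (k+1)).isSome) : (parkAux f k).isSome := by
  rw [parkAux] at h
  cases hp : parkAux f k with
  | none => rw [hp] at h; simp at h
  | some occ => simp

lemma parkAux_isSome_mono {n : ℕ} {f : Fin n → Fin n} {k l : ℕ} (hkl : k ≤ l)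
    (h : (parkAux f l).isSome) : (parkAux f k).isSome := by
  induction l with
  | zero =>
    have : k = 0 := by omega
    subst this
    exact h
  | succ l ih =>
    rcases Nat.lt_or_ge k (l+1) with hk | hk
    · exact ih (by omega) (parkAux_isSome_of_succ h)
    · have : k = l + 1 := by omega
      subst this; exact h

lemma parkAux_mono_some' {n : ℕ} {f : Fin n → Fin n} {k : ℕ}
    {occ : Fin n → Option (Fin n)}
    (hk : parkAux f k = some occ)
    {s c : Fin n} (hs : occ s = some c) :
    ∀ l, k ≤ l → ∀ occ', parkAux f l = some occ' → occ' s = some c := by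
  intro l
  induction l with
  | zero =>
    intro hkl occ' hl
    have : k = 0 := by omega
    subst this
    rw [hk] at hl
    cases hl
    exact hs
  | succ l ih =>
    intro hkl occ' hl
    rcases Nat.lt_or_ge k (l+1) with hlt | hge
    · have hks : (parkAux f l).isSome := parkAux_isSome_of_succ (by rw [hl]; rfl)
      obtain ⟨occ1, hocc1⟩ := Option.isSome_iff_exists.1 hks
      have h1 : occ1 s = some c := ih (by omega) occ1 hocc1
      rw [parkAux, hocc1, Option.bind_some] at hl
      by_cases h : l < n
      · rw [dif_pos h] at hl
        by_cases hS : (Finset.univ.filter fun t => f ⟨l, h⟩ ≤ t ∧ occ1 t = none).Nonempty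
        · rw [dif_pos hS] at hl
          have := Option.some_injective _ hl
          subst this
          have hmem := Finset.min'_mem _ hS
          have hnone := (Finset.mem_filter.1 hmem).2.2
          have hne : s ≠ (Finset.univ.filter fun t => f ⟨l, h⟩ ≤ t ∧ occ1 t = none).min' hS := by
            intro hcon
            rw [← hcon, h1] at hnone
            exact Option.some_ne_none _ hnone
          rw [Function.update_of_ne hne]
          exact h1
        · rw [dif_neg hS] at hl; exact absurd hl (by simp)
      · rw [dif_neg h] at hl
        have := Option.some_injective _ hl
        subst this
        exact h1
    · have : k = l + 1 := by omega
      subst this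
      rw [hk] at hl
      cases hl
      exact hs

lemma parkAux_mono_some {n : ℕ} {f : Fin n → Fin n} {k l : ℕ} (hkl : k ≤ l)
    {occ occ' : Fin n → Option (Fin n)}
    (hk : parkAux f k = some occ) (hl : parkAux f l = some occ')
    {s c : Fin n} (hs : occ s = some c) : occ' s = some c :=
  parkAux_mono_some' hk hs l hkl occ' hl

lemma parkAux_eq_occK_of_final {n : ℕ} {f : Fin n → Fin n} {ρ : Equiv.Perm (Fin n)}
    (hfin : parkAux f n = some fun s => some (ρ s)) :
    ∀ k, k ≤ n → parkAux f k = some (occK ρ k) := by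
  intro k
  induction k with
  | zero =>
    intro _
    simp only [parkAux]
    congr 1
  | succ k ih =>
    intro hk1
    have h : k < n := hk1
    have hkk := ih (le_of_lt h)
    have hsome : (parkAux f (k+1)).isSome := by
      refine parkAux_isSome_mono hk1 ?_
      rw [hfin]; rfl
    rw [parkAux, hkk, Option.bind_some, dif_pos h] at hsome ⊢
    by_cases hS : (Finset.univ.filter fun t => f ⟨k, h⟩ ≤ t ∧ occK ρ k t = none).Nonempty
    · rw [dif_pos hS] at hsome ⊢
      set t := (Finset.univ.filter fun t => f ⟨k, h⟩ ≤ t ∧ occK ρ k t = none).min' hS with htdef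
      have hupd : Function.update (occK ρ k) t (some ⟨k, h⟩) t = some ⟨k, h⟩ :=
        Function.update_self _ _ _
      have hfinal : ρ t = ⟨k, h⟩ := by
        have := parkAux_mono_some (Nat.le_of_lt_succ (Nat.lt_succ_of_le hk1))
          (by rw [parkAux, hkk, Option.bind_some, dif_pos h, dif_pos hS]) hfin hupd
        exact Option.some_injective _ this
      congr 1
      funext u
      by_cases hut : u = t
      · subst hut
        simp [Function.update_self, occK, hfinal]
      · rw [Function.update_of_ne hut]
        have hne : ρ u ≠ ρ t := fun hcon => hut (ρ.injective hcon)
        rw [hfinal] at hne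
        have hne' : (ρ u).val ≠ k := fun hcon => hne (Fin.ext hcon)
        simp only [occK]
        by_cases hlt : (ρ u).val < k
        · rw [if_pos hlt, if_pos (Nat.lt_succ_of_lt hlt)]
        · rw [if_neg hlt, if_neg (by omega)]
    · rw [dif_neg hS] at hsome
      exact absurd hsome (by simp)

lemma cond_of_parkAux {n : ℕ} {f : Fin n → Fin n} {ρ : Equiv.Perm (Fin n)}
    (hfin : parkAux f n = some fun s => some (ρ s)) : Cond f ρ := by
  intro s
  set k : ℕ := (ρ s).val with hkdef
  have h : k < n := (ρ s).isLt
  have hc : (⟨k, h⟩ : Fin n) = ρ s := rfl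
  have hkk := parkAux_eq_occK_of_final hfin k (le_of_lt h)
  have hk1 := parkAux_eq_occK_of_final hfin (k+1) h
  rw [parkAux, hkk, Option.bind_some, dif_pos h] at hk1
  by_cases hS : (Finset.univ.filter fun t => f ⟨k, h⟩ ≤ t ∧ occK ρ k t = none).Nonempty
  · rw [dif_pos hS] at hk1
    have hk1' := Option.some_injective _ hk1
    set t := (Finset.univ.filter fun t => f ⟨k, h⟩ ≤ t ∧ occK ρ k t = none).min' hS with htdef
    have hts : t = s := by
      have h1 : Function.update (occK ρ k) t (some ⟨k, h⟩) t = some ⟨k, h⟩ :=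
        Function.update_self _ _ _
      rw [hk1'] at h1
      simp only [occK] at h1
      by_cases hlt : (ρ t).val < k + 1
      · rw [if_pos hlt] at h1
        have : ρ t = ⟨k, h⟩ := Option.some_injective _ h1
        rw [hc] at this
        exact ρ.injective this
      · rw [if_neg hlt] at h1; exact absurd h1 (by simp)
    have hmem := Finset.min'_mem _ hS
    rw [← htdef, hts] at hmem
    obtain ⟨-, hfs, -⟩ := Finset.mem_filter.1 hmem
    rw [hc] at hfs
    refine ⟨hfs, ?_⟩
    intro u hfu hus
    by_contra hcon
    push_neg at hcon
    have hneq : ρ u ≠ ρ s := fun hcc => (ne_of_lt hus) (ρ.injective hcc)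
    have hgt : ρ s < ρ u := lt_of_le_of_ne hcon (Ne.symm hneq)
    have hunotlt : ¬ (ρ u).val < k := by
      rw [hkdef]; exact not_lt.2 (le_of_lt hgt)
    have humem : u ∈ (Finset.univ.filter fun t => f ⟨k, h⟩ ≤ t ∧ occK ρ k t = none) := by
      refine Finset.mem_filter.2 ⟨Finset.mem_univ _, by rwa [hc], ?_⟩
      simp [occK, hunotlt]
    have := Finset.min'_le _ _ humem
    rw [← htdef, hts] at this
    exact absurd (lt_of_lt_of_le hus this) (lt_irrefl _)
  · rw [dif_neg hS] at hk1
    exact absurd hk1 (by simp)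

lemma cond_iff_parkAux {n : ℕ} {f : Fin n → Fin n} {ρ : Equiv.Perm (Fin n)} :
    Cond f ρ ↔ parkAux f n = some fun s => some (ρ s) := by
  constructor
  · intro hc
    have := parkAux_of_cond hc n le_rfl
    rw [this]
    congr 1
    funext s
    simp [occK, (ρ s).isLt]
  · exact cond_of_parkAux

lemma cond_unique {n : ℕ} {f : Fin n → Fin n} {ρ1 ρ2 : Equiv.Perm (Fin n)}
    (h1 : Cond f ρ1) (h2 : Cond f ρ2) : ρ1 = ρ2 := by
  rw [cond_iff_parkAux] at h1 h2
  rw [h1] at h2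
  have := Option.some_injective _ h2
  ext s
  have := congrFun this s
  exact Fin.val_eq_of_eq (Option.some_injective _ this)

def Uni {n : ℕ} (ρ : Equiv.Perm (Fin n)) : Prop :=
  ∀ s : Fin n, (∀ t, t < s → ρ t < ρ s) ∨ (∀ t, s < t → ρ t < ρ s)

lemma pf_of_cond {n : ℕ} {f : Fin n → Fin n} {ρ : Equiv.Perm (Fin n)}
    (hc : Cond f ρ) : IsParkingFunction f := by
  intro i
  have himg : (Finset.Iic i).image (fun t => ρ t) ⊆ Finset.univ.filter (fun j => f j ≤ i) := by
    intro x hx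
    obtain ⟨t, ht, rfl⟩ := Finset.mem_image.1 hx
    exact Finset.mem_filter.2 ⟨Finset.mem_univ _, le_trans (hc t).1 (Finset.mem_Iic.1 ht)⟩
  have hcard := Finset.card_le_card himg
  rwa [Finset.card_image_of_injective _ ρ.injective, Fin.card_Iic] at hcard

lemma strictMono_vec3 {n : ℕ} {i j k : Fin n} (hij : i < j) (hjk : j < k) :
    StrictMono ![i, j, k] := by
  intro a b hab
  fin_cases a <;> fin_cases b <;>
    simp_all [Matrix.cons_val_zero, Matrix.cons_val_one, Matrix.head_cons] <;>
    first
      | exact hij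
      | exact hjk
      | exact lt_trans hij hjk
      | exact absurd hab (by decide)

lemma avoidsAll_iff_uni {n : ℕ} (ρ : Equiv.Perm (Fin n)) :
    AvoidsAll ρ [p213, p312] ↔ Uni ρ := by
  constructor
  · intro hav s
    by_contra hcon
    push_neg at hcon
    obtain ⟨⟨t1, ht1, ht1'⟩, t2, ht2, ht2'⟩ := hcon
    have h1 : ρ s < ρ t1 :=
      lt_of_le_of_ne ht1' fun hcc => (ne_of_lt ht1) (ρ.injective hcc).symm
    have h2 : ρ s < ρ t2 :=
      lt_of_le_of_ne ht2' fun hcc => (ne_of_gt ht2) (ρ.injective hcc).symm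
    have h12 : ρ t1 ≠ ρ t2 := fun hcc => (ne_of_lt (lt_trans ht1 ht2)) (ρ.injective hcc)
    rcases lt_or_gt_of_ne h12 with hlt | hgt
    · refine hav p213 (by simp) ⟨![t1, s, t2], strictMono_vec3 ht1 ht2, ?_⟩
      intro a b
      fin_cases a <;> fin_cases b <;>
        simp [p213, Equiv.ofBijective_apply, Matrix.cons_val_zero, Matrix.cons_val_one,
          Matrix.head_cons] <;>
        first
          | exact h1
          | exact hlt
          | exact h2
          | exact le_of_lt h1
          | exact le_of_lt hlt
          | exact le_of_lt h2
          | exact le_of_lt (lt_trans h1 hlt)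
          | decide
    · refine hav p312 (by simp) ⟨![t1, s, t2], strictMono_vec3 ht1 ht2, ?_⟩
      intro a b
      fin_cases a <;> fin_cases b <;>
        simp [p312, Equiv.ofBijective_apply, Matrix.cons_val_zero, Matrix.cons_val_one,
          Matrix.head_cons] <;>
        first
          | exact h1
          | exact hgt
          | exact h2
          | exact le_of_lt h1
          | exact le_of_lt hgt
          | exact le_of_lt h2
          | exact le_of_lt (lt_trans h2 hgt)
          | decide
  · intro huni σ hσ hcont
    obtain ⟨g, hg, hcond⟩ := hcont
    have hval : ∃ i j k : Fin n, i < j ∧ j < k ∧ ρ j < ρ i ∧ ρ j < ρ k := by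
      simp only [List.mem_cons, List.mem_singleton] at hσ
      rcases hσ with rfl | rfl | h
      · refine ⟨g 0, g 1, g 2, hg (by decide), hg (by decide), ?_, ?_⟩
        · exact (hcond 1 0).1 (by decide)
        · exact lt_trans ((hcond 1 0).1 (by decide)) ((hcond 0 2).1 (by decide))
      · refine ⟨g 0, g 1, g 2, hg (by decide), hg (by decide), ?_, ?_⟩
        · exact lt_trans ((hcond 1 2).1 (by decide)) ((hcond 2 0).1 (by decide))
        · exact (hcond 1 2).1 (by decide)
      · exact absurd h List.not_mem_nil
    obtain ⟨i, j, k, hij, hjk, hji, hjk'⟩ := hval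
    rcases huni j with h | h
    · exact absurd (h i hij) (not_lt.2 (le_of_lt hji))
    · exact absurd (h k hjk) (not_lt.2 (le_of_lt hjk'))

lemma subtype_iff {n : ℕ} (f : Fin n → Fin n) :
    (IsParkingFunction f ∧ ∃ ρ, IsParkingPerm f ρ ∧ AvoidsAll ρ [p213, p312]) ↔
      ∃ ρ : Equiv.Perm (Fin n), Cond f ρ ∧ Uni ρ := by
  constructor
  · rintro ⟨-, ρ, hperm, hav⟩
    exact ⟨ρ, cond_of_parkAux hperm, (avoidsAll_iff_uni ρ).1 hav⟩
  · rintro ⟨ρ, hc, hu⟩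
    exact ⟨pf_of_cond hc, ρ, cond_iff_parkAux.1 hc, (avoidsAll_iff_uni ρ).2 hu⟩

section Construction

variable {m : ℕ}

lemma card_insert_last (S : Finset (Fin (m+1))) (hS : Fin.last m ∉ S) :
    (insert (Fin.last m) S).card = S.card + 1 :=
  Finset.card_insert_of_notMem hS

lemma card_S_le (S : Finset (Fin (m+1))) (hS : Fin.last m ∉ S) : S.card ≤ m := by
  have h1 : (insert (Fin.last m) S).card ≤ m + 1 := by
    have := Finset.card_le_univ (insert (Fin.last m) S)
    simpa using this
  rw [card_insert_last S hS] at h1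
  omega

lemma card_compl_insert_last (S : Finset (Fin (m+1))) (hS : Fin.last m ∉ S) :
    ((insert (Fin.last m) S)ᶜ).card = m - S.card := by
  rw [Finset.card_compl, card_insert_last S hS]
  simp only [Fintype.card_fin]
  omega

/-- the unimodal permutation with pre-peak value set `S`, as a function. -/
def permAFun (S : Finset (Fin (m+1))) (hS : Fin.last m ∉ S) : Fin (m+1) → Fin (m+1) :=
  fun s =>
    if h : s.val < S.card + 1 then
      (insert (Fin.last m) S).orderEmbOfFin (card_insert_last S hS) ⟨s.val, h⟩
    else
      ((insert (Fin.last m) S)ᶜ).orderEmbOfFin (card_compl_insert_last S hS)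
        ⟨m - s.val, by have := s.isLt; omega⟩

lemma permAFun_inj (S : Finset (Fin (m+1))) (hS : Fin.last m ∉ S) :
    Function.Injective (permAFun S hS) := by
  intro s t hst
  unfold permAFun at hst
  by_cases h1 : s.val < S.card + 1 <;> by_cases h2 : t.val < S.card + 1
  · rw [dif_pos h1, dif_pos h2] at hst
    have := (Finset.orderEmbOfFin (insert (Fin.last m) S)
      (card_insert_last S hS)).injective hst
    exact Fin.ext (Fin.mk_eq_mk.1 this)
  · rw [dif_pos h1, dif_neg h2] at hst
    have hmem1 := Finset.orderEmbOfFin_mem (insert (Fin.last m) S) (card_insert_last S hS)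
      ⟨s.val, h1⟩
    have hmem2 := Finset.orderEmbOfFin_mem ((insert (Fin.last m) S)ᶜ)
      (card_compl_insert_last S hS) ⟨m - t.val, by have := t.isLt; omega⟩
    rw [hst] at hmem1
    exact absurd hmem1 (Finset.mem_compl.1 hmem2)
  · rw [dif_neg h1, dif_pos h2] at hst
    have hmem1 := Finset.orderEmbOfFin_mem (insert (Fin.last m) S) (card_insert_last S hS)
      ⟨t.val, h2⟩
    have hmem2 := Finset.orderEmbOfFin_mem ((insert (Fin.last m) S)ᶜ)
      (card_compl_insert_last S hS) ⟨m - s.val, by have := s.isLt; omega⟩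
    rw [← hst] at hmem1
    exact absurd hmem1 (Finset.mem_compl.1 hmem2)
  · rw [dif_neg h1, dif_neg h2] at hst
    have := (Finset.orderEmbOfFin ((insert (Fin.last m) S)ᶜ)
      (card_compl_insert_last S hS)).injective hst
    have hv : m - s.val = m - t.val := congrArg Fin.val this
    have hs := s.isLt
    have ht := t.isLt
    exact Fin.ext (by omega)

/-- the unimodal permutation with pre-peak value set `S`. -/
def permA (S : Finset (Fin (m+1))) (hS : Fin.last m ∉ S) : Equiv.Perm (Fin (m+1)) :=
  Equiv.ofBijective (permAFun S hS)
    (Finite.injective_iff_bijective.1 (permAFun_inj S hS))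

lemma permA_apply (S : Finset (Fin (m+1))) (hS : Fin.last m ∉ S) (s : Fin (m+1)) :
    permA S hS s = permAFun S hS s := rfl

lemma permA_apply_lt (S : Finset (Fin (m+1))) (hS : Fin.last m ∉ S) (s : Fin (m+1))
    (h : s.val < S.card + 1) :
    permA S hS s =
      (insert (Fin.last m) S).orderEmbOfFin (card_insert_last S hS) ⟨s.val, h⟩ := by
  rw [permA_apply, permAFun, dif_pos h]

lemma permA_apply_ge (S : Finset (Fin (m+1))) (hS : Fin.last m ∉ S) (s : Fin (m+1))
    (h : ¬ s.val < S.card + 1) :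
    permA S hS s =
      ((insert (Fin.last m) S)ᶜ).orderEmbOfFin (card_compl_insert_last S hS)
        ⟨m - s.val, by have := s.isLt; omega⟩ := by
  rw [permA_apply, permAFun, dif_neg h]

lemma permA_peak (S : Finset (Fin (m+1))) (hS : Fin.last m ∉ S) :
    permA S hS ⟨S.card, Nat.lt_succ_of_le (card_S_le S hS)⟩ = Fin.last m := by
  rw [permA_apply_lt S hS _ (Nat.lt_succ_self _)]
  have hpos : 0 < S.card + 1 := Nat.succ_pos _
  have h := Finset.orderEmbOfFin_last (card_insert_last S hS) hpos
  have hmax : (insert (Fin.last m) S).max'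
      (Finset.card_pos.mp (by rw [card_insert_last S hS]; omega)) = Fin.last m := by
    refine le_antisymm (Fin.le_last _) ?_
    exact Finset.le_max' _ _ (Finset.mem_insert_self _ _)
  simp only [Nat.add_sub_cancel] at h
  rw [h, hmax]

lemma permA_lt_last (S : Finset (Fin (m+1))) (hS : Fin.last m ∉ S) (s : Fin (m+1))
    (h : ¬ s.val < S.card + 1) : permA S hS s < Fin.last m := by
  rw [permA_apply_ge S hS s h]
  have hmem := Finset.orderEmbOfFin_mem ((insert (Fin.last m) S)ᶜ)
    (card_compl_insert_last S hS) ⟨m - s.val, by have := s.isLt; omega⟩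
  have hne : ((insert (Fin.last m) S)ᶜ).orderEmbOfFin (card_compl_insert_last S hS)
      ⟨m - s.val, by have := s.isLt; omega⟩ ≠ Fin.last m := by
    intro hcon
    rw [hcon] at hmem
    exact (Finset.mem_compl.1 hmem) (Finset.mem_insert_self _ _)
  exact lt_of_le_of_ne (Fin.le_last _) hne

lemma permA_mono1 (S : Finset (Fin (m+1))) (hS : Fin.last m ∉ S) {s t : Fin (m+1)}
    (hst : s < t) (ht : t.val < S.card + 1) : permA S hS s < permA S hS t := by
  have hs : s.val < S.card + 1 := lt_trans hst ht
  rw [permA_apply_lt S hS s hs, permA_apply_lt S hS t ht]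
  exact (Finset.orderEmbOfFin (insert (Fin.last m) S)
    (card_insert_last S hS)).strictMono (show (⟨s.val, hs⟩ : Fin (S.card+1)) < ⟨t.val, ht⟩ from hst)

lemma permA_mono2 (S : Finset (Fin (m+1))) (hS : Fin.last m ∉ S) {s t : Fin (m+1)}
    (hs : ¬ s.val < S.card + 1) (hst : s < t) : permA S hS t < permA S hS s := by
  have ht : ¬ t.val < S.card + 1 := by have : s.val < t.val := hst; omega
  rw [permA_apply_ge S hS s hs, permA_apply_ge S hS t ht]
  refine (Finset.orderEmbOfFin ((insert (Fin.last m) S)ᶜ)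
    (card_compl_insert_last S hS)).strictMono ?_
  show m - t.val < m - s.val
  have h1 : s.val < t.val := hst
  have h2 := t.isLt
  omega

lemma permA_uni (S : Finset (Fin (m+1))) (hS : Fin.last m ∉ S) : Uni (permA S hS) := by
  intro s
  by_cases h : s.val < S.card + 1
  · exact Or.inl fun t hts => permA_mono1 S hS hts h
  · exact Or.inr fun t hts => permA_mono2 S hS h hts

lemma permA_cond_forced (S : Finset (Fin (m+1))) (hS : Fin.last m ∉ S)
    {f : Fin (m+1) → Fin (m+1)} (hc : Cond f (permA S hS)) {s : Fin (m+1)}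
    (hs : ¬ s.val < S.card + 1) : f (permA S hS s) = s := by
  by_contra hne
  have hle := (hc s).1
  have hlt : f (permA S hS s) < s := lt_of_le_of_ne hle hne
  have hs1 : 1 ≤ s.val := by omega
  set t : Fin (m+1) := ⟨s.val - 1, by have := s.isLt; omega⟩ with htdef
  have hts : t < s := by
    show s.val - 1 < s.val
    omega
  have hft : f (permA S hS s) ≤ t := by
    have : (f (permA S hS s)).val < s.val := hlt
    show (f (permA S hS s)).val ≤ s.val - 1
    omega
  have hgot := (hc s).2 t hft hts
  have htv : t.val = s.val - 1 := rfl
  by_cases hcase : t.val < S.card + 1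
  · have hteq : t.val = S.card := by omega
    have : permA S hS t = Fin.last m := by
      have : t = ⟨S.card, Nat.lt_succ_of_le (card_S_le S hS)⟩ := Fin.ext hteq
      rw [this]
      exact permA_peak S hS
    rw [this] at hgot
    exact absurd hgot (not_lt.2 (Fin.le_last _))
  · exact absurd (permA_mono2 S hS hcase hts) (not_lt.2 (le_of_lt hgot))

lemma permA_cond_iff (S : Finset (Fin (m+1))) (hS : Fin.last m ∉ S)
    (f : Fin (m+1) → Fin (m+1)) :
    Cond f (permA S hS) ↔
      (∀ s : Fin (m+1), s.val < S.card + 1 → f (permA S hS s) ≤ s) ∧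
      (∀ s : Fin (m+1), ¬ s.val < S.card + 1 → f (permA S hS s) = s) := by
  constructor
  · intro hc
    exact ⟨fun s _ => (hc s).1, fun s hs => permA_cond_forced S hS hc hs⟩
  · rintro ⟨h1, h2⟩ s
    by_cases hs : s.val < S.card + 1
    · refine ⟨h1 s hs, ?_⟩
      intro t _ hts
      exact permA_mono1 S hS hts hs
    · refine ⟨le_of_eq (h2 s hs), ?_⟩
      intro t hft hts
      rw [h2 s hs] at hft
      exact absurd hts (not_lt.2 hft)

end Construction

section Bijection

variable {m : ℕ}

/-- parameter space: a set of pre-peak values together with a choice of preference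
for each car parking on the increasing run. -/
def TT (m : ℕ) : Type :=
  Σ S : {S : Finset (Fin (m+1)) // Fin.last m ∉ S},
    {g : Fin (S.1.card + 1) → Fin (m+1) // ∀ i, (g i).val ≤ i.val}

/-- the parking function associated to a parameter. -/
def Phi (x : TT m) : Fin (m+1) → Fin (m+1) := fun c =>
  if h : ((permA x.1.1 x.1.2).symm c).val < x.1.1.card + 1 then
    x.2.1 ⟨((permA x.1.1 x.1.2).symm c).val, h⟩
  else (permA x.1.1 x.1.2).symm c

lemma Phi_apply_perm (x : TT m) (s : Fin (m+1)) :
    Phi x (permA x.1.1 x.1.2 s) =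
      if h : s.val < x.1.1.card + 1 then x.2.1 ⟨s.val, h⟩ else s := by
  unfold Phi
  simp only [Equiv.symm_apply_apply]

lemma Phi_cond (x : TT m) : Cond (Phi x) (permA x.1.1 x.1.2) := by
  rw [permA_cond_iff]
  constructor
  · intro s hs
    rw [Phi_apply_perm, dif_pos hs]
    exact x.2.2 ⟨s.val, hs⟩
  · intro s hs
    rw [Phi_apply_perm, dif_neg hs]

lemma permA_eq_last_iff (S : Finset (Fin (m+1))) (hS : Fin.last m ∉ S) (s : Fin (m+1)) :
    permA S hS s = Fin.last m ↔ s.val = S.card := by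
  constructor
  · intro h
    by_cases hs : s.val < S.card + 1
    · by_contra hne
      have hlt : s.val < S.card := by omega
      have := permA_mono1 S hS (show s < ⟨S.card, Nat.lt_succ_of_le (card_S_le S hS)⟩ from hlt)
        (Nat.lt_succ_self _)
      rw [permA_peak S hS, h] at this
      exact absurd this (lt_irrefl _)
    · have := permA_lt_last S hS s hs
      rw [h] at this
      exact absurd this (lt_irrefl _)
  · intro h
    have : s = ⟨S.card, Nat.lt_succ_of_le (card_S_le S hS)⟩ := Fin.ext h
    rw [this]
    exact permA_peak S hS

lemma permA_mem_insert {T T' : Finset (Fin (m+1))} (hT : Fin.last m ∉ T)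
    (hT' : Fin.last m ∉ T') (hperm : permA T hT = permA T' hT') (hc : T.card = T'.card)
    {x : Fin (m+1)} (hx : x ∈ insert (Fin.last m) T) : x ∈ insert (Fin.last m) T' := by
  have hx' : x ∈ Set.range ((insert (Fin.last m) T).orderEmbOfFin (card_insert_last T hT)) := by
    rw [Finset.range_orderEmbOfFin]
    exact hx
  obtain ⟨i, hi⟩ := hx'
  have hTm := card_S_le T hT
  have hiv : i.val < m + 1 := by
    have := i.isLt
    omega
  have hieq : (⟨(⟨i.val, hiv⟩ : Fin (m+1)).val, i.isLt⟩ : Fin (T.card + 1)) = i := Fin.ext rfl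
  have hs : permA T hT ⟨i.val, hiv⟩ = x := by
    rw [permA_apply_lt T hT _ i.isLt, hieq, hi]
  rw [hperm] at hs
  have hlt : (⟨i.val, hiv⟩ : Fin (m+1)).val < T'.card + 1 := by
    show i.val < T'.card + 1
    have := i.isLt
    omega
  rw [permA_apply_lt T' hT' _ hlt] at hs
  rw [← hs]
  exact Finset.orderEmbOfFin_mem _ _ _

lemma permA_injS {S S' : Finset (Fin (m+1))} {hS : Fin.last m ∉ S} {hS' : Fin.last m ∉ S'}
    (h : permA S hS = permA S' hS') : S = S' := by
  have hcard : S.card = S'.card := by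
    have h1 := permA_peak S hS
    have h2 : permA S' hS' ⟨S.card, Nat.lt_succ_of_le (card_S_le S hS)⟩ = Fin.last m := by
      rw [← h]; exact h1
    exact (permA_eq_last_iff S' hS' _).1 h2
  have hins : insert (Fin.last m) S = insert (Fin.last m) S' := by
    apply Finset.ext
    intro x
    exact ⟨permA_mem_insert hS hS' h hcard, permA_mem_insert hS' hS h.symm hcard.symm⟩
  have := congrArg (fun T => Finset.erase T (Fin.last m)) hins
  simpa [Finset.erase_insert hS, Finset.erase_insert hS'] using this

lemma Phi_injective : Function.Injective (Phi (m := m)) := by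
  rintro ⟨⟨S, hS⟩, g⟩ ⟨⟨S', hS'⟩, g'⟩ h
  have hc1 : Cond (Phi ⟨⟨S, hS⟩, g⟩) (permA S hS) := Phi_cond _
  have hc2 : Cond (Phi ⟨⟨S, hS⟩, g⟩) (permA S' hS') := by
    rw [h]; exact Phi_cond _
  have hperm : permA S hS = permA S' hS' := cond_unique hc1 hc2
  have hSS : S = S' := permA_injS hperm
  subst hSS
  have hg : g = g' := by
    apply Subtype.ext
    funext i
    have hSm := card_S_le S hS
    have hcoe : ((⟨S, hS⟩ : {S : Finset (Fin (m+1)) // Fin.last m ∉ S}) : Finset (Fin (m+1))).card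
        = S.card := rfl
    have hiv : i.val < m + 1 := by
      have := i.isLt
      omega
    have := congrFun h (permA S hS ⟨i.val, hiv⟩)
    erw [Phi_apply_perm, Phi_apply_perm] at this
    rw [dif_pos (show (⟨i.val, hiv⟩ : Fin (m+1)).val < S.card + 1 from i.isLt),
      dif_pos (show (⟨i.val, hiv⟩ : Fin (m+1)).val < S.card + 1 from i.isLt)] at this
    have hieq : (⟨(⟨i.val, hiv⟩ : Fin (m+1)).val, i.isLt⟩ : Fin (S.card + 1)) = i :=
      Fin.ext rfl
    rwa [hieq] at this
  rw [hg]

lemma uni_incr {ρ : Equiv.Perm (Fin (m+1))} (hu : Uni ρ) {t s : Fin (m+1)}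
    (hts : t < s) (hsp : s ≤ ρ.symm (Fin.last m)) : ρ t < ρ s := by
  rcases hu s with h | h
  · exact h t hts
  · rcases eq_or_lt_of_le hsp with heq | hlt
    · have hρs : ρ s = Fin.last m := by rw [heq]; exact ρ.apply_symm_apply _
      rw [hρs]
      refine lt_of_le_of_ne (Fin.le_last _) fun hcon => ?_
      have : t = ρ.symm (Fin.last m) := by rw [← hcon]; exact (ρ.symm_apply_apply t).symm
      rw [← heq] at this
      exact (ne_of_lt hts) this
    · have := h (ρ.symm (Fin.last m)) hlt
      rw [ρ.apply_symm_apply] at this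
      exact absurd this (not_lt.2 (Fin.le_last _))

lemma uni_decr {ρ : Equiv.Perm (Fin (m+1))} (hu : Uni ρ) {s t : Fin (m+1)}
    (hps : ρ.symm (Fin.last m) ≤ s) (hst : s < t) : ρ t < ρ s := by
  rcases hu s with h | h
  · rcases eq_or_lt_of_le hps with heq | hlt
    · have hρs : ρ s = Fin.last m := by rw [← heq]; exact ρ.apply_symm_apply _
      rw [hρs]
      refine lt_of_le_of_ne (Fin.le_last _) fun hcon => ?_
      have h3 : t = ρ.symm (Fin.last m) := by rw [← hcon]; exact (ρ.symm_apply_apply t).symm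
      rw [h3, ← heq] at hst
      exact absurd hst (lt_irrefl _)
    · have := h (ρ.symm (Fin.last m)) hlt
      rw [ρ.apply_symm_apply] at this
      exact absurd this (not_lt.2 (Fin.le_last _))
  · exact h t hst

lemma Phi_surjective (f : Fin (m+1) → Fin (m+1))
    (hex : ∃ ρ : Equiv.Perm (Fin (m+1)), Cond f ρ ∧ Uni ρ) : ∃ x : TT m, Phi x = f := by
  obtain ⟨ρ, hc, hu⟩ := hex
  set p : Fin (m+1) := ρ.symm (Fin.last m) with hpdef
  set S : Finset (Fin (m+1)) := (Finset.Iio p).image ⇑ρ with hSdef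
  have hS : Fin.last m ∉ S := by
    intro hmem
    obtain ⟨t, ht, hteq⟩ := Finset.mem_image.1 hmem
    have : t = p := by
      rw [hpdef, ← hteq]
      exact (ρ.symm_apply_apply t).symm
    rw [this] at ht
    exact absurd (Finset.mem_Iio.1 ht) (lt_irrefl _)
  have hcard : S.card = p.val := by
    rw [hSdef, Finset.card_image_of_injective _ ρ.injective, Fin.card_Iio]
  have hpm : p.val ≤ m := Nat.lt_succ_iff.1 p.isLt
  have hperm : permA S hS = ρ := by
    apply Equiv.ext
    intro s
    -- increasing part
    have hu_mono : StrictMono (fun i : Fin (S.card + 1) =>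
        ρ ⟨i.val, by have := i.isLt; omega⟩) := by
      intro i j hij
      refine uni_incr hu (show (⟨i.val, _⟩ : Fin (m+1)) < ⟨j.val, _⟩ from hij) ?_
      show j.val ≤ p.val
      have := j.isLt
      omega
    have hu_mem : ∀ i : Fin (S.card + 1),
        (fun i : Fin (S.card + 1) => ρ ⟨i.val, by have := i.isLt; omega⟩) i
          ∈ insert (Fin.last m) S := by
      intro i
      by_cases hi : i.val = S.card
      · have heq : (⟨i.val, by have := i.isLt; omega⟩ : Fin (m+1)) = p :=
          Fin.ext (by rw [hi, hcard])
        simp only [heq]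
        rw [hpdef, ρ.apply_symm_apply]
        exact Finset.mem_insert_self _ _
      · have hilt : i.val < p.val := by have := i.isLt; omega
        refine Finset.mem_insert_of_mem (Finset.mem_image.2 ⟨⟨i.val, by omega⟩, ?_, rfl⟩)
        exact Finset.mem_Iio.2 hilt
    have hu_eq := Finset.orderEmbOfFin_unique (card_insert_last S hS) hu_mem hu_mono
    -- decreasing part
    have hv_mono : StrictMono (fun i : Fin (m - S.card) =>
        ρ ⟨m - i.val, by omega⟩) := by
      intro i j hij
      have hjv := j.isLt
      have hiv := i.isLt
      refine uni_decr hu (s := ⟨m - j.val, by omega⟩) (t := ⟨m - i.val, by omega⟩) ?_ ?_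
      · show p.val ≤ m - j.val
        omega
      · show m - j.val < m - i.val
        omega
    have hv_mem : ∀ i : Fin (m - S.card),
        (fun i : Fin (m - S.card) => ρ ⟨m - i.val, by omega⟩) i
          ∈ (insert (Fin.last m) S)ᶜ := by
      intro i
      have hiv := i.isLt
      refine Finset.mem_compl.2 fun hmem => ?_
      rcases Finset.mem_insert.1 hmem with heq | hmem'
      · have h1 : (⟨m - i.val, by omega⟩ : Fin (m+1)) = p := by
          rw [hpdef, ← heq]
          exact (ρ.symm_apply_apply _).symm
        have h2 : m - i.val = p.val := congrArg Fin.val h1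
        omega
      · obtain ⟨t, ht, hteq⟩ := Finset.mem_image.1 hmem'
        have h1 : t = (⟨m - i.val, by omega⟩ : Fin (m+1)) := ρ.injective hteq
        rw [h1] at ht
        have h2' := Finset.mem_Iio.1 ht
        have h2 : m - i.val < p.val := h2'
        omega
    have hv_eq := Finset.orderEmbOfFin_unique (card_compl_insert_last S hS) hv_mem hv_mono
    by_cases h : s.val < S.card + 1
    · rw [permA_apply_lt S hS s h, ← congrFun hu_eq ⟨s.val, h⟩]
    · rw [permA_apply_ge S hS s h,
        ← congrFun hv_eq ⟨m - s.val, by have := s.isLt; omega⟩]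
      simp only
      congr 1
      apply Fin.ext
      show m - (m - s.val) = s.val
      have := s.isLt
      omega
  have hSm : S.card + 1 ≤ m + 1 := Nat.succ_le_succ (card_S_le S hS)
  refine ⟨⟨⟨S, hS⟩, ⟨fun i => f (ρ (Fin.castLE hSm i)), fun i => (hc (Fin.castLE hSm i)).1⟩⟩, ?_⟩
  funext c
  show Phi _ c = f c
  unfold Phi
  simp only [hperm]
  by_cases h : (ρ.symm c).val < S.card + 1
  · rw [dif_pos h]
    show f (ρ (Fin.castLE hSm ⟨(ρ.symm c).val, h⟩)) = f c
    rw [show Fin.castLE hSm ⟨(ρ.symm c).val, h⟩ = ρ.symm c from Fin.ext rfl]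
    rw [ρ.apply_symm_apply]
  · rw [dif_neg h]
    have hforced := permA_cond_forced S hS (f := f)
      (by rw [hperm]; exact hc) (s := ρ.symm c) h
    rw [hperm, ρ.apply_symm_apply] at hforced
    exact hforced.symm

end Bijection

section Count

lemma fin_prod_factorial (c : ℕ) : (∏ i : Fin c, (i.val + 1)) = c.factorial := by
  exact (Fin.prod_univ_eq_prod_range (fun x => x + 1) c).trans
    (Finset.prod_range_add_one_eq_factorial c)

lemma card_le_val {m : ℕ} (j : ℕ) (hj : j ≤ m) :
    Fintype.card {b : Fin (m+1) // b.val ≤ j} = j + 1 := by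
  rw [Fintype.card_subtype]
  have : (Finset.univ.filter fun b : Fin (m+1) => b.val ≤ j) = Finset.Iic ⟨j, by omega⟩ := by
    ext b
    simp [Finset.mem_Iic, Fin.le_def]
  rw [this, Fin.card_Iic]

lemma card_g {m : ℕ} (c : ℕ) (hc : c ≤ m + 1) :
    Fintype.card {g : Fin c → Fin (m+1) // ∀ i, (g i).val ≤ i.val} = c.factorial := by
  rw [Fintype.card_congr (Equiv.subtypePiEquivPi (p := fun (i : Fin c) (b : Fin (m+1)) => b.val ≤ i.val)),
    Fintype.card_pi]
  rw [← fin_prod_factorial c]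
  apply Finset.prod_congr rfl
  intro i _
  exact card_le_val i.val (by have := i.isLt; omega)

lemma nat_card_TT (m : ℕ) :
    Nat.card (TT m) = ∑ k ∈ Finset.range (m + 1), Nat.choose m k * (k + 1).factorial := by
  have h1 : Nat.card (TT m) =
      ∑ S : {S : Finset (Fin (m+1)) // Fin.last m ∉ S},
        Fintype.card {g : Fin (S.1.card + 1) → Fin (m+1) // ∀ i, (g i).val ≤ i.val} := by
    rw [show TT m = Σ S : {S : Finset (Fin (m+1)) // Fin.last m ∉ S},
      {g : Fin (S.1.card + 1) → Fin (m+1) // ∀ i, (g i).val ≤ i.val} from rfl]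
    rw [Nat.card_eq_fintype_card, Fintype.card_sigma]
  rw [h1]
  have h2 : ∀ S : {S : Finset (Fin (m+1)) // Fin.last m ∉ S},
      Fintype.card {g : Fin (S.1.card + 1) → Fin (m+1) // ∀ i, (g i).val ≤ i.val}
        = (S.1.card + 1).factorial := by
    intro S
    exact card_g _ (Nat.succ_le_succ (card_S_le S.1 S.2))
  rw [Finset.sum_congr rfl fun S _ => h2 S]
  have h3 : ∀ S : Finset (Fin (m+1)),
      S ∈ (Finset.univ.erase (Fin.last m)).powerset ↔ Fin.last m ∉ S := by
    intro S
    simp [Finset.mem_powerset, Finset.subset_erase]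
  have h4 : (∑ S : {S : Finset (Fin (m+1)) // Fin.last m ∉ S}, (S.1.card + 1).factorial)
      = ∑ S ∈ (Finset.univ.erase (Fin.last m)).powerset, (S.card + 1).factorial :=
    (Finset.sum_subtype _ h3 (fun S => (S.card + 1).factorial)).symm
  rw [h4, Finset.sum_powerset]
  have hcard : (Finset.univ.erase (Fin.last m)).card = m := by
    rw [Finset.card_erase_of_mem (Finset.mem_univ _), Finset.card_univ, Fintype.card_fin]
    exact Nat.add_sub_cancel m 1
  rw [hcard]
  apply Finset.sum_congr rfl
  intro j _
  rw [Finset.sum_powersetCard j (Finset.univ.erase (Fin.last m)) (fun c => (c + 1).factorial),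
    hcard, smul_eq_mul]

end Count

theorem stmt18 (n : ℕ) (hn : 1 ≤ n) :
    pk n [p213, p312] =
      ∑ k ∈ Finset.range n, Nat.choose (n - 1) k * (k + 1).factorial := by
  obtain ⟨m, rfl⟩ : ∃ m, n = m + 1 := ⟨n - 1, by omega⟩
  rw [pk]
  have e1 : {f : Fin (m+1) → Fin (m+1) // IsParkingFunction f ∧
      ∃ ρ : Equiv.Perm (Fin (m+1)), IsParkingPerm f ρ ∧ AvoidsAll ρ [p213, p312]} ≃
      {f : Fin (m+1) → Fin (m+1) // ∃ ρ : Equiv.Perm (Fin (m+1)), Cond f ρ ∧ Uni ρ} :=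
    Equiv.subtypeEquivRight fun f => subtype_iff f
  have hb : Function.Bijective (fun x : TT m =>
      (⟨Phi x, permA x.1.1 x.1.2, Phi_cond x, permA_uni _ _⟩ :
        {f : Fin (m+1) → Fin (m+1) // ∃ ρ : Equiv.Perm (Fin (m+1)), Cond f ρ ∧ Uni ρ})) := by
    constructor
    · intro x y hxy
      exact Phi_injective (congrArg Subtype.val hxy)
    · rintro ⟨f, hf⟩
      obtain ⟨x, hx⟩ := Phi_surjective f hf
      exact ⟨x, Subtype.ext hx⟩
  have e2 := Equiv.ofBijective _ hb
  rw [Nat.card_congr (e1.trans e2.symm), nat_card_TT]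
  simp only [Nat.add_sub_cancel]
end
end
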